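/- arXiv:1108.2427 — 8 statements merged into one kernel-verified Lean document; each statement's English description precedes it below -/
import Mathlib

section
/- Let L₁ and L₂ be regular languages over Σ. Then the hairpin completion H_κ(L₁,L₂) is linear context-free: there exists a context-free grammar G generating H_κ(L₁,L₂) in which the right-hand side of every production rule contains at most one nonterminal symbol. -/
/-- The antimorphic extension of an involution on letters to words. -/
def ovr {σ : Type} (bar : σ → σ) (w : List σ) : List σ := (w.map bar).reverse

/-- The hairpin completion `H_κ(L₁, L₂)`. -/
def hairpinCompletion {σ : Type} (bar : σ → σ) (κ : ℕ) (L1 L2 : Language σ) :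
    Language σ :=
  { π | ∃ γ α β : List σ,
      π = γ ++ α ++ β ++ ovr bar α ++ ovr bar γ ∧
      κ ≤ α.length ∧
      (γ ++ α ++ β ++ ovr bar α ∈ L1 ∨ α ++ β ++ ovr bar α ++ ovr bar γ ∈ L2) }

/-- A symbol is a nonterminal. -/
def isNonterminal {T N : Type*} : Symbol T N → Bool
  | Symbol.nonterminal _ => true
  | Symbol.terminal _ => false


namespace HairpinAux

open ContextFreeGrammar

universe uT uN
variable {T : Type uT} {g : ContextFreeGrammar T}

inductive DerIn (g : ContextFreeGrammar T) :
    ℕ → List (Symbol T g.NT) → List (Symbol T g.NT) → Prop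
  | refl (w : List (Symbol T g.NT)) : DerIn g 0 w w
  | head {n : ℕ} {u v w : List (Symbol T g.NT)} (h : g.Produces u v) (hd : DerIn g n v w) :
      DerIn g (n + 1) u w

lemma DerIn.derives {n : ℕ} {u v : List (Symbol T g.NT)} (h : DerIn g n u v) :
    g.Derives u v := by
  induction h with
  | refl w => rfl
  | head h _ ih => exact h.trans_derives ih

lemma DerIn.tail {n : ℕ} {u v w : List (Symbol T g.NT)} (h : DerIn g n u v)
    (h2 : g.Produces v w) : DerIn g (n + 1) u w := by
  induction h with
  | refl w => exact .head h2 (.refl _)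
  | head hp _ ih => exact .head hp (ih h2)

lemma derives_iff_derIn {u v : List (Symbol T g.NT)} :
    g.Derives u v ↔ ∃ n, DerIn g n u v := by
  constructor
  · intro h
    induction h with
    | refl => exact ⟨0, .refl _⟩
    | tail _ hp ih => obtain ⟨n, hn⟩ := ih; exact ⟨n + 1, hn.tail hp⟩
  · rintro ⟨n, h⟩; exact h.derives

lemma DerIn.split {n : ℕ} {u z : List (Symbol T g.NT)} (h : DerIn g n u z) :
    ∀ {x y : List (Symbol T g.NT)}, u = x ++ y →
      ∃ n1 n2 x' y', n1 ≤ n ∧ n2 ≤ n ∧ z = x' ++ y' ∧ DerIn g n1 x x' ∧ DerIn g n2 y y' := by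
  induction h with
  | refl w =>
    rintro x y rfl
    exact ⟨0, 0, x, y, le_refl _, le_refl _, rfl, .refl _, .refl _⟩
  | head hp hd ih =>
    rintro x y rfl
    obtain ⟨r, hr, hrw⟩ := hp
    obtain ⟨p, q, hu, hv⟩ := hrw.exists_parts
    rw [List.append_assoc] at hu
    rcases List.append_eq_append_iff.mp hu with ⟨l, hpl, hy⟩ | ⟨l, hx, hq⟩
    · -- nonterminal inside y
      have hpy : g.Produces y (l ++ r.output ++ q) :=
        ⟨r, hr, by rw [hy, ← List.append_assoc]; exact r.rewrites_of_exists_parts l q⟩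
      obtain ⟨n1, n2, x', y', h1, h2, h3, h4, h5⟩ :=
        ih (x := x) (y := l ++ r.output ++ q) (by rw [hv, hpl]; simp)
      exact ⟨n1, n2 + 1, x', y', by omega, by omega, h3, h4, .head hpy h5⟩
    · cases l with
      | nil =>
        simp at hx hq
        have hpy : g.Produces y (r.output ++ q) :=
          ⟨r, hr, by rw [← hq]; exact ContextFreeRule.Rewrites.head q⟩
        obtain ⟨n1, n2, x', y', h1, h2, h3, h4, h5⟩ :=
          ih (x := x) (y := r.output ++ q) (by rw [hv, hx]; simp)
        exact ⟨n1, n2 + 1, x', y', by omega, by omega, h3, h4, .head hpy h5⟩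
      | cons s l' =>
        simp only [List.cons_append, List.cons.injEq, List.singleton_append] at hq
        obtain ⟨hs, hql⟩ := hq
        simp only [List.nil_append] at hql
        have hpx : g.Produces x (p ++ r.output ++ l') :=
          ⟨r, hr, by rw [hx, ← hs]; simpa using r.rewrites_of_exists_parts p l'⟩
        obtain ⟨n1, n2, x', y', h1, h2, h3, h4, h5⟩ :=
          ih (x := p ++ r.output ++ l') (y := y) (by rw [hv, hql]; simp)
        exact ⟨n1 + 1, n2, x', y', by omega, by omega, h3, .head hpx h4, h5⟩

lemma DerIn.all_terminal {n : ℕ} {w v : List (Symbol T g.NT)} (h : DerIn g n w v)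
    (hall : ∀ s ∈ w, ∃ t, s = Symbol.terminal t) : v = w := by
  induction h with
  | refl => rfl
  | head hp hd ih =>
    exfalso
    obtain ⟨r, hr, hrw⟩ := hp
    obtain ⟨p, q, hu, -⟩ := hrw.exists_parts
    obtain ⟨t, ht⟩ := hall (Symbol.nonterminal r.input) (by rw [hu]; simp)
    simp at ht

lemma derIn_map_terminal {n : ℕ} {u : List T} {v : List (Symbol T g.NT)}
    (h : DerIn g n (u.map Symbol.terminal) v) : v = u.map Symbol.terminal :=
  h.all_terminal (by rintro s hs; rw [List.mem_map] at hs; obtain ⟨t, -, rfl⟩ := hs; exact ⟨t, rfl⟩)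

lemma derIn_singleNT {n : ℕ} {A : g.NT} {w : List T}
    (h : DerIn g n [Symbol.nonterminal A] (w.map Symbol.terminal)) :
    ∃ r ∈ g.rules, r.input = A ∧ ∃ m, m < n ∧ DerIn g m r.output (w.map Symbol.terminal) := by
  generalize hz : w.map Symbol.terminal = z at h
  cases h with
  | refl => cases w <;> simp_all
  | head hp hd =>
    subst hz
    obtain ⟨r, hr, hrw⟩ := hp
    obtain ⟨p, q, hu, hv⟩ := hrw.exists_parts
    have hlen := congrArg List.length hu
    simp at hlen
    obtain ⟨hp0, hq0⟩ : p = [] ∧ q = [] :=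
      ⟨List.length_eq_zero_iff.mp (by omega), List.length_eq_zero_iff.mp (by omega)⟩
    subst hp0; subst hq0
    simp at hu hv
    exact ⟨r, hr, hu.symm, _, Nat.lt_succ_self _, hv ▸ hd⟩

lemma derIn_left {n : ℕ} {a : T} {x : List (Symbol T g.NT)} {w : List T}
    (h : DerIn g n (Symbol.terminal a :: x) (w.map Symbol.terminal)) :
    ∃ w', w = a :: w' ∧ ∃ m ≤ n, DerIn g m x (w'.map Symbol.terminal) := by
  obtain ⟨n1, n2, x', y', h1, h2, h3, h4, h5⟩ := h.split (x := [Symbol.terminal a]) (y := x) rfl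
  have hx' : x' = [a].map Symbol.terminal := derIn_map_terminal (u := [a]) (by simpa using h4)
  subst hx'
  rw [List.map_eq_append_iff] at h3
  obtain ⟨w1, w2, rfl, hw1, hw2⟩ := h3
  have : w1 = [a] := by
    cases w1 with
    | nil => simp at hw1
    | cons b t => simp at hw1; simp [hw1.1, hw1.2]
  subst this
  exact ⟨w2, rfl, n2, by omega, hw2 ▸ h5⟩

lemma derIn_right {n : ℕ} {c : T} {x : List (Symbol T g.NT)} {w : List T}
    (h : DerIn g n (x ++ [Symbol.terminal c]) (w.map Symbol.terminal)) :
    ∃ w', w = w' ++ [c] ∧ ∃ m ≤ n, DerIn g m x (w'.map Symbol.terminal) := by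
  obtain ⟨n1, n2, x', y', h1, h2, h3, h4, h5⟩ := h.split (x := x) (y := [Symbol.terminal c]) rfl
  have hy' : y' = [c].map Symbol.terminal := derIn_map_terminal (u := [c]) (by simpa using h5)
  subst hy'
  rw [List.map_eq_append_iff] at h3
  obtain ⟨w1, w2, rfl, hw1, hw2⟩ := h3
  have : w2 = [c] := by
    cases w2 with
    | nil => simp at hw2
    | cons b t => simp at hw2; simp [hw2.1, hw2.2]
  subst this
  exact ⟨w1, rfl, n1, by omega, hw1 ▸ h4⟩

lemma derIn_middle {n : ℕ} {a c : T} {x : List (Symbol T g.NT)} {w : List T}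
    (h : DerIn g n (Symbol.terminal a :: (x ++ [Symbol.terminal c])) (w.map Symbol.terminal)) :
    ∃ w', w = a :: w' ++ [c] ∧ ∃ m ≤ n, DerIn g m x (w'.map Symbol.terminal) := by
  obtain ⟨w1, rfl, m, hm, hd⟩ := derIn_left h
  obtain ⟨w', rfl, m', hm', hd'⟩ := derIn_right hd
  exact ⟨w', rfl, m', by omega, hd'⟩

end HairpinAux

namespace HairpinAux

@[simp] lemma ovr_nil {σ : Type} (bar : σ → σ) : ovr bar [] = [] := rfl

@[simp] lemma ovr_cons {σ : Type} (bar : σ → σ) (a : σ) (w : List σ) :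
    ovr bar (a :: w) = ovr bar w ++ [bar a] := by simp [ovr]

universe uNT

/-- Nonterminals of the hairpin grammar. -/
inductive HNT (Q1 Q2 : Type) : Type
  | S : HNT Q1 Q2
  | A1 : Q1 → HNT Q1 Q2
  | B1 : Q1 → Q1 → ℕ → HNT Q1 Q2
  | C1 : Q1 → Q1 → HNT Q1 Q2
  | A2 : Q2 → HNT Q1 Q2
  | B2 : Q2 → Q2 → ℕ → HNT Q1 Q2
  | C2 : Q2 → Q2 → HNT Q1 Q2

variable {σ Q1 Q2 : Type}

def rS1 (M1 : DFA σ Q1) : ContextFreeRule σ (HNT Q1 Q2) :=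
  ⟨.S, [.nonterminal (.A1 M1.start)]⟩

def rS2 (f : Q2) : ContextFreeRule σ (HNT Q1 Q2) :=
  ⟨.S, [.nonterminal (.A2 f)]⟩

def rA1 (bar : σ → σ) (M1 : DFA σ Q1) (p : Q1) (a : σ) : ContextFreeRule σ (HNT Q1 Q2) :=
  ⟨.A1 p, [.terminal a, .nonterminal (.A1 (M1.step p a)), .terminal (bar a)]⟩

def rA1B (κ : ℕ) (p f : Q1) : ContextFreeRule σ (HNT Q1 Q2) :=
  ⟨.A1 p, [.nonterminal (.B1 p f κ)]⟩

def rB1 (bar : σ → σ) (M1 : DFA σ Q1) (p s' : Q1) (a : σ) (j : ℕ) :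
    ContextFreeRule σ (HNT Q1 Q2) :=
  ⟨.B1 p (M1.step s' (bar a)) j,
    [.terminal a, .nonterminal (.B1 (M1.step p a) s' (j - 1)), .terminal (bar a)]⟩

def rB1C (p s : Q1) : ContextFreeRule σ (HNT Q1 Q2) :=
  ⟨.B1 p s 0, [.nonterminal (.C1 p s)]⟩

def rC1 (M1 : DFA σ Q1) (p s : Q1) (b : σ) : ContextFreeRule σ (HNT Q1 Q2) :=
  ⟨.C1 p s, [.terminal b, .nonterminal (.C1 (M1.step p b) s)]⟩

def rC1E (p : Q1) : ContextFreeRule σ (HNT Q1 Q2) := ⟨.C1 p p, []⟩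

def rA2 (bar : σ → σ) (M2 : DFA σ Q2) (s' : Q2) (a : σ) : ContextFreeRule σ (HNT Q1 Q2) :=
  ⟨.A2 (M2.step s' (bar a)), [.terminal a, .nonterminal (.A2 s'), .terminal (bar a)]⟩

def rA2B (κ : ℕ) (M2 : DFA σ Q2) (s : Q2) : ContextFreeRule σ (HNT Q1 Q2) :=
  ⟨.A2 s, [.nonterminal (.B2 M2.start s κ)]⟩

def rB2 (bar : σ → σ) (M2 : DFA σ Q2) (p s' : Q2) (a : σ) (j : ℕ) :
    ContextFreeRule σ (HNT Q1 Q2) :=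
  ⟨.B2 p (M2.step s' (bar a)) j,
    [.terminal a, .nonterminal (.B2 (M2.step p a) s' (j - 1)), .terminal (bar a)]⟩

def rB2C (p s : Q2) : ContextFreeRule σ (HNT Q1 Q2) :=
  ⟨.B2 p s 0, [.nonterminal (.C2 p s)]⟩

def rC2 (M2 : DFA σ Q2) (p s : Q2) (b : σ) : ContextFreeRule σ (HNT Q1 Q2) :=
  ⟨.C2 p s, [.terminal b, .nonterminal (.C2 (M2.step p b) s)]⟩

def rC2E (p : Q2) : ContextFreeRule σ (HNT Q1 Q2) := ⟨.C2 p p, []⟩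

def RuleSpec (bar : σ → σ) (κ : ℕ) (M1 : DFA σ Q1) (M2 : DFA σ Q2) :
    Set (ContextFreeRule σ (HNT Q1 Q2)) :=
  { r | r = rS1 M1
      ∨ (∃ f ∈ M2.accept, r = rS2 f)
      ∨ (∃ p a, r = rA1 bar M1 p a)
      ∨ (∃ p f, f ∈ M1.accept ∧ r = rA1B κ p f)
      ∨ (∃ p s' a j, j ≤ κ ∧ r = rB1 bar M1 p s' a j)
      ∨ (∃ p s, r = rB1C p s)
      ∨ (∃ p s b, r = rC1 M1 p s b)
      ∨ (∃ p, r = rC1E p)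
      ∨ (∃ s' a, r = rA2 bar M2 s' a)
      ∨ (∃ s, r = rA2B κ M2 s)
      ∨ (∃ p s' a j, j ≤ κ ∧ r = rB2 bar M2 p s' a j)
      ∨ (∃ p s, r = rB2C p s)
      ∨ (∃ p s b, r = rC2 M2 p s b)
      ∨ (∃ p, r = rC2E p) }

lemma ruleSpec_finite [Fintype σ] [Fintype Q1] [Fintype Q2]
    (bar : σ → σ) (κ : ℕ) (M1 : DFA σ Q1) (M2 : DFA σ Q2) :
    (RuleSpec bar κ M1 M2).Finite := by
  apply Set.Finite.subset (s := {rS1 (Q2 := Q2) M1}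
    ∪ Set.range (rS2 (σ := σ) (Q1 := Q1))
    ∪ Set.range (fun x : Q1 × σ => rA1 (Q2 := Q2) bar M1 x.1 x.2)
    ∪ Set.range (fun x : Q1 × Q1 => rA1B (σ := σ) (Q2 := Q2) κ x.1 x.2)
    ∪ Set.range (fun x : Q1 × Q1 × σ × Fin (κ + 1) => rB1 (Q2 := Q2) bar M1 x.1 x.2.1 x.2.2.1 x.2.2.2.val)
    ∪ Set.range (fun x : Q1 × Q1 => rB1C (σ := σ) (Q2 := Q2) x.1 x.2)
    ∪ Set.range (fun x : Q1 × Q1 × σ => rC1 (Q2 := Q2) M1 x.1 x.2.1 x.2.2)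
    ∪ Set.range (rC1E (σ := σ) (Q2 := Q2))
    ∪ Set.range (fun x : Q2 × σ => rA2 (Q1 := Q1) bar M2 x.1 x.2)
    ∪ Set.range (rA2B (Q1 := Q1) κ M2)
    ∪ Set.range (fun x : Q2 × Q2 × σ × Fin (κ + 1) => rB2 (Q1 := Q1) bar M2 x.1 x.2.1 x.2.2.1 x.2.2.2.val)
    ∪ Set.range (fun x : Q2 × Q2 => rB2C (σ := σ) (Q1 := Q1) x.1 x.2)
    ∪ Set.range (fun x : Q2 × Q2 × σ => rC2 (Q1 := Q1) M2 x.1 x.2.1 x.2.2)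
    ∪ Set.range (rC2E (σ := σ) (Q1 := Q1)))
  · exact ((((((((((((((Set.finite_singleton _).union (Set.finite_range _)).union
      (Set.finite_range _)).union (Set.finite_range _)).union (Set.finite_range _)).union
      (Set.finite_range _)).union (Set.finite_range _)).union (Set.finite_range _)).union
      (Set.finite_range _)).union (Set.finite_range _)).union (Set.finite_range _)).union
      (Set.finite_range _)).union (Set.finite_range _)).union (Set.finite_range _))
  · intro r hr
    simp only [RuleSpec, Set.mem_setOf_eq] at hr
    simp only [Set.mem_union, Set.mem_singleton_iff, Set.mem_range, Prod.exists]
    rcases hr with rfl | ⟨f, _, rfl⟩ | ⟨p, a, rfl⟩ | ⟨p, f, _, rfl⟩ |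
      ⟨p, s', a, j, hj, rfl⟩ | ⟨p, s, rfl⟩ | ⟨p, s, b, rfl⟩ | ⟨p, rfl⟩ |
      ⟨s', a, rfl⟩ | ⟨s, rfl⟩ | ⟨p, s', a, j, hj, rfl⟩ | ⟨p, s, rfl⟩ | ⟨p, s, b, rfl⟩ | ⟨p, rfl⟩
    · iterate 13 left
      exact rfl
    · iterate 12 left
      right; exact ⟨f, rfl⟩
    · iterate 11 left
      right; exact ⟨p, a, rfl⟩
    · iterate 10 left
      right; exact ⟨p, f, rfl⟩
    · iterate 9 left
      right; exact ⟨p, s', a, ⟨j, by omega⟩, rfl⟩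
    · iterate 8 left
      right; exact ⟨p, s, rfl⟩
    · iterate 7 left
      right; exact ⟨p, s, b, rfl⟩
    · iterate 6 left
      right; exact ⟨p, rfl⟩
    · iterate 5 left
      right; exact ⟨s', a, rfl⟩
    · iterate 4 left
      right; exact ⟨s, rfl⟩
    · iterate 3 left
      right; exact ⟨p, s', a, ⟨j, by omega⟩, rfl⟩
    · iterate 2 left
      right; exact ⟨p, s, rfl⟩
    · left; right; exact ⟨p, s, b, rfl⟩
    · right; exact ⟨p, rfl⟩

/-- The hairpin grammar. -/
@[reducible] noncomputable def hGrammar [Fintype σ] [Fintype Q1] [Fintype Q2]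
    (bar : σ → σ) (κ : ℕ) (M1 : DFA σ Q1) (M2 : DFA σ Q2) : ContextFreeGrammar σ :=
  ⟨HNT Q1 Q2, .S, (ruleSpec_finite bar κ M1 M2).toFinset⟩

lemma mem_rules_iff [Fintype σ] [Fintype Q1] [Fintype Q2]
    {bar : σ → σ} {κ : ℕ} {M1 : DFA σ Q1} {M2 : DFA σ Q2}
    {r : ContextFreeRule σ (HNT Q1 Q2)} :
    r ∈ (hGrammar bar κ M1 M2).rules ↔ r ∈ RuleSpec bar κ M1 M2 :=
  Set.Finite.mem_toFinset _

end HairpinAux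

namespace HairpinAux

variable {σ Q1 Q2 : Type}

@[simp] lemma evalFrom_cons (M : DFA σ Q1) (p : Q1) (a : σ) (w : List σ) :
    M.evalFrom p (a :: w) = M.evalFrom (M.step p a) w := rfl

/-- Intended language of each nonterminal. -/
def Sem (bar : σ → σ) (κ : ℕ) (M1 : DFA σ Q1) (M2 : DFA σ Q2) :
    HNT Q1 Q2 → Language σ
  | .S => hairpinCompletion bar κ M1.accepts M2.accepts
  | .A1 p => { w | ∃ γ α β : List σ, w = γ ++ α ++ β ++ ovr bar α ++ ovr bar γ ∧
      κ ≤ α.length ∧ M1.evalFrom p (γ ++ α ++ β ++ ovr bar α) ∈ M1.accept }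
  | .B1 p s j => { w | ∃ α β : List σ, w = α ++ β ++ ovr bar α ∧
      j ≤ α.length ∧ M1.evalFrom p w = s }
  | .C1 p s => { w | M1.evalFrom p w = s }
  | .A2 s => { w | ∃ γ α β : List σ, w = γ ++ α ++ β ++ ovr bar α ++ ovr bar γ ∧
      κ ≤ α.length ∧ M2.evalFrom M2.start (α ++ β ++ ovr bar α ++ ovr bar γ) = s }
  | .B2 p s j => { w | ∃ α β : List σ, w = α ++ β ++ ovr bar α ∧
      j ≤ α.length ∧ M2.evalFrom p w = s }
  | .C2 p s => { w | M2.evalFrom p w = s }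

variable [Fintype σ] [Fintype Q1] [Fintype Q2]
  {bar : σ → σ} {κ : ℕ} {M1 : DFA σ Q1} {M2 : DFA σ Q2}

lemma sound : ∀ (n : ℕ) (A : HNT Q1 Q2) (w : List σ),
    DerIn (hGrammar bar κ M1 M2) n [Symbol.nonterminal A] (w.map Symbol.terminal) →
    w ∈ Sem bar κ M1 M2 A := by
  intro n
  induction n using Nat.strong_induction_on with
  | _ n ih =>
    intro A w h
    obtain ⟨r, hr, hin, m, hm, hd⟩ := derIn_singleNT h
    rw [mem_rules_iff] at hr
    subst hin
    rcases hr with rfl | ⟨f, hf, rfl⟩ | ⟨p, a, rfl⟩ | ⟨p, f, hf, rfl⟩ |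
      ⟨p, s', a, j, hj, rfl⟩ | ⟨p, s, rfl⟩ | ⟨p, s, b, rfl⟩ | ⟨p, rfl⟩ |
      ⟨s', a, rfl⟩ | ⟨s, rfl⟩ | ⟨p, s', a, j, hj, rfl⟩ | ⟨p, s, rfl⟩ | ⟨p, s, b, rfl⟩ | ⟨p, rfl⟩
    · -- rS1
      simp only [rS1] at hd
      obtain ⟨γ, α, β, hw, hκ, hacc⟩ := ih m hm _ w hd
      exact ⟨γ, α, β, hw, hκ, Or.inl (by rw [DFA.mem_accepts]; exact hacc)⟩
    · -- rS2
      simp only [rS2] at hd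
      obtain ⟨γ, α, β, hw, hκ, heval⟩ := ih m hm _ w hd
      exact ⟨γ, α, β, hw, hκ, Or.inr (by
        rw [DFA.mem_accepts]
        show M2.evalFrom M2.start _ ∈ _
        rw [heval]; exact hf)⟩
    · -- rA1
      simp only [rA1] at hd
      replace hd : DerIn (hGrammar bar κ M1 M2) m
          (Symbol.terminal a :: ([Symbol.nonterminal (HNT.A1 (M1.step p a))] ++ [Symbol.terminal (bar a)]))
          (w.map Symbol.terminal) := hd
      obtain ⟨w', rfl, m', hm', hd'⟩ := derIn_middle hd
      obtain ⟨γ, α, β, hw', hκ, hacc⟩ := ih m' (lt_of_le_of_lt hm' hm) _ w' hd'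
      refine ⟨a :: γ, α, β, ?_, hκ, ?_⟩
      · rw [hw']; simp
      · simpa [hw'] using hacc
    · -- rA1B
      simp only [rA1B] at hd
      obtain ⟨α, β, hw, hκα, heval⟩ := ih m hm _ w hd
      refine ⟨[], α, β, by simp [hw], hκα, ?_⟩
      have : ([] : List σ) ++ α ++ β ++ ovr bar α = w := by simp [hw]
      rw [this, heval]; exact hf
    · -- rB1
      simp only [rB1] at hd
      replace hd : DerIn (hGrammar bar κ M1 M2) m
          (Symbol.terminal a :: ([Symbol.nonterminal (HNT.B1 (M1.step p a) s' (j - 1))] ++ [Symbol.terminal (bar a)]))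
          (w.map Symbol.terminal) := hd
      obtain ⟨w', rfl, m', hm', hd'⟩ := derIn_middle hd
      obtain ⟨α, β, hw', hlen, heval⟩ := ih m' (lt_of_le_of_lt hm' hm) _ w' hd'
      refine ⟨a :: α, β, ?_, by simp; omega, ?_⟩
      · rw [hw']; simp
      · simp [DFA.evalFrom_append_singleton, heval]
    · -- rB1C
      simp only [rB1C] at hd
      have hC := ih m hm _ w hd
      exact ⟨[], w, by simp, by simp, hC⟩
    · -- rC1
      simp only [rC1] at hd
      obtain ⟨w', rfl, m', hm', hd'⟩ := derIn_left hd
      have hC := ih m' (lt_of_le_of_lt hm' hm) _ w' hd'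
      exact hC
    · -- rC1E
      simp only [rC1E] at hd
      have hmap : w.map Symbol.terminal = ([] : List σ).map Symbol.terminal :=
        derIn_map_terminal (u := ([] : List σ)) hd
      simp at hmap
      subst hmap
      rfl
    · -- rA2
      simp only [rA2] at hd
      replace hd : DerIn (hGrammar bar κ M1 M2) m
          (Symbol.terminal a :: ([Symbol.nonterminal (HNT.A2 s')] ++ [Symbol.terminal (bar a)]))
          (w.map Symbol.terminal) := hd
      obtain ⟨w', rfl, m', hm', hd'⟩ := derIn_middle hd
      obtain ⟨γ, α, β, hw', hκ, heval⟩ := ih m' (lt_of_le_of_lt hm' hm) _ w' hd'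
      refine ⟨a :: γ, α, β, ?_, hκ, ?_⟩
      · rw [hw']; simp
      · have heq : α ++ β ++ ovr bar α ++ ovr bar (a :: γ) =
            (α ++ β ++ ovr bar α ++ ovr bar γ) ++ [bar a] := by simp
        rw [heq, DFA.evalFrom_append_singleton, heval]
    · -- rA2B
      simp only [rA2B] at hd
      obtain ⟨α, β, hw, hκα, heval⟩ := ih m hm _ w hd
      refine ⟨[], α, β, by simp [hw], hκα, ?_⟩
      have : α ++ β ++ ovr bar α ++ ovr bar ([] : List σ) = w := by simp [hw]
      rw [this]; exact heval
    · -- rB2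
      simp only [rB2] at hd
      replace hd : DerIn (hGrammar bar κ M1 M2) m
          (Symbol.terminal a :: ([Symbol.nonterminal (HNT.B2 (M2.step p a) s' (j - 1))] ++ [Symbol.terminal (bar a)]))
          (w.map Symbol.terminal) := hd
      obtain ⟨w', rfl, m', hm', hd'⟩ := derIn_middle hd
      obtain ⟨α, β, hw', hlen, heval⟩ := ih m' (lt_of_le_of_lt hm' hm) _ w' hd'
      refine ⟨a :: α, β, ?_, by simp; omega, ?_⟩
      · rw [hw']; simp
      · simp [DFA.evalFrom_append_singleton, heval]
    · -- rB2C
      simp only [rB2C] at hd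
      have hC := ih m hm _ w hd
      exact ⟨[], w, by simp, by simp, hC⟩
    · -- rC2
      simp only [rC2] at hd
      obtain ⟨w', rfl, m', hm', hd'⟩ := derIn_left hd
      have hC := ih m' (lt_of_le_of_lt hm' hm) _ w' hd'
      exact hC
    · -- rC2E
      simp only [rC2E] at hd
      have hmap : w.map Symbol.terminal = ([] : List σ).map Symbol.terminal :=
        derIn_map_terminal (u := ([] : List σ)) hd
      simp at hmap
      subst hmap
      rfl

end HairpinAux

namespace HairpinAux

variable {σ Q1 Q2 : Type} [Fintype σ] [Fintype Q1] [Fintype Q2]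
  {bar : σ → σ} {κ : ℕ} {M1 : DFA σ Q1} {M2 : DFA σ Q2}

open ContextFreeGrammar

lemma produces_rule {r : ContextFreeRule σ (HNT Q1 Q2)} (hr : r ∈ RuleSpec bar κ M1 M2) :
    (hGrammar bar κ M1 M2).Produces [Symbol.nonterminal r.input] r.output :=
  ⟨r, mem_rules_iff.mpr hr, ContextFreeRule.Rewrites.input_output⟩

lemma mem_rS1 : rS1 (Q2 := Q2) M1 ∈ RuleSpec bar κ M1 M2 := Or.inl rfl

lemma mem_rS2 {f : Q2} (hf : f ∈ M2.accept) :
    rS2 (σ := σ) (Q1 := Q1) f ∈ RuleSpec bar κ M1 M2 := Or.inr (Or.inl ⟨f, hf, rfl⟩)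

lemma mem_rA1 (p : Q1) (a : σ) : rA1 (Q2 := Q2) bar M1 p a ∈ RuleSpec bar κ M1 M2 :=
  Or.inr (Or.inr (Or.inl ⟨p, a, rfl⟩))

lemma mem_rA1B {p f : Q1} (hf : f ∈ M1.accept) :
    rA1B (σ := σ) (Q2 := Q2) κ p f ∈ RuleSpec bar κ M1 M2 :=
  Or.inr (Or.inr (Or.inr (Or.inl ⟨p, f, hf, rfl⟩)))

lemma mem_rB1 (p s' : Q1) (a : σ) (j : ℕ) (hj : j ≤ κ) :
    rB1 (Q2 := Q2) bar M1 p s' a j ∈ RuleSpec bar κ M1 M2 :=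
  Or.inr (Or.inr (Or.inr (Or.inr (Or.inl ⟨p, s', a, j, hj, rfl⟩))))

lemma mem_rB1C (p s : Q1) : rB1C (σ := σ) (Q2 := Q2) p s ∈ RuleSpec bar κ M1 M2 :=
  Or.inr (Or.inr (Or.inr (Or.inr (Or.inr (Or.inl ⟨p, s, rfl⟩)))))

lemma mem_rC1 (p s : Q1) (b : σ) : rC1 (Q2 := Q2) M1 p s b ∈ RuleSpec bar κ M1 M2 :=
  Or.inr (Or.inr (Or.inr (Or.inr (Or.inr (Or.inr (Or.inl ⟨p, s, b, rfl⟩))))))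

lemma mem_rC1E (p : Q1) : rC1E (σ := σ) (Q2 := Q2) p ∈ RuleSpec bar κ M1 M2 :=
  Or.inr (Or.inr (Or.inr (Or.inr (Or.inr (Or.inr (Or.inr (Or.inl ⟨p, rfl⟩)))))))

lemma mem_rA2 (s' : Q2) (a : σ) : rA2 (Q1 := Q1) bar M2 s' a ∈ RuleSpec bar κ M1 M2 :=
  Or.inr (Or.inr (Or.inr (Or.inr (Or.inr (Or.inr (Or.inr (Or.inr (Or.inl ⟨s', a, rfl⟩))))))))

lemma mem_rA2B (s : Q2) : rA2B (σ := σ) (Q1 := Q1) κ M2 s ∈ RuleSpec bar κ M1 M2 :=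
  Or.inr (Or.inr (Or.inr (Or.inr (Or.inr (Or.inr (Or.inr (Or.inr (Or.inr (Or.inl ⟨s, rfl⟩)))))))))

lemma mem_rB2 (p s' : Q2) (a : σ) (j : ℕ) (hj : j ≤ κ) :
    rB2 (Q1 := Q1) bar M2 p s' a j ∈ RuleSpec bar κ M1 M2 :=
  Or.inr (Or.inr (Or.inr (Or.inr (Or.inr (Or.inr (Or.inr (Or.inr (Or.inr (Or.inr
    (Or.inl ⟨p, s', a, j, hj, rfl⟩))))))))))

lemma mem_rB2C (p s : Q2) : rB2C (σ := σ) (Q1 := Q1) p s ∈ RuleSpec bar κ M1 M2 :=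
  Or.inr (Or.inr (Or.inr (Or.inr (Or.inr (Or.inr (Or.inr (Or.inr (Or.inr (Or.inr
    (Or.inr (Or.inl ⟨p, s, rfl⟩)))))))))))

lemma mem_rC2 (p s : Q2) (b : σ) : rC2 (Q1 := Q1) M2 p s b ∈ RuleSpec bar κ M1 M2 :=
  Or.inr (Or.inr (Or.inr (Or.inr (Or.inr (Or.inr (Or.inr (Or.inr (Or.inr (Or.inr
    (Or.inr (Or.inr (Or.inl ⟨p, s, b, rfl⟩))))))))))))

lemma mem_rC2E (p : Q2) : rC2E (σ := σ) (Q1 := Q1) p ∈ RuleSpec bar κ M1 M2 :=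
  Or.inr (Or.inr (Or.inr (Or.inr (Or.inr (Or.inr (Or.inr (Or.inr (Or.inr (Or.inr
    (Or.inr (Or.inr (Or.inr ⟨p, rfl⟩))))))))))))

lemma derives_wrap {X : HNT Q1 Q2} {w : List σ} {a c : σ}
    (h : (hGrammar bar κ M1 M2).Derives [Symbol.nonterminal X] (w.map Symbol.terminal)) :
    (hGrammar bar κ M1 M2).Derives
      [Symbol.terminal a, Symbol.nonterminal X, Symbol.terminal c]
      ((a :: w ++ [c]).map Symbol.terminal) := by
  have := (h.append_left [Symbol.terminal a]).append_right [Symbol.terminal c]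
  simpa using this

lemma compl_C1 (β : List σ) : ∀ (p : Q1),
    (hGrammar bar κ M1 M2).Derives
      [Symbol.nonterminal (HNT.C1 p (M1.evalFrom p β))] (β.map Symbol.terminal) := by
  induction β with
  | nil => intro p; exact (produces_rule (mem_rC1E (bar := bar) (κ := κ) (M2 := M2) p)).single
  | cons b β ih =>
    intro p
    have h2 := (ih (M1.step p b)).append_left [Symbol.terminal b]
    exact (produces_rule (mem_rC1 (bar := bar) (κ := κ) (M2 := M2) p (M1.evalFrom (M1.step p b) β) b)).trans_derives
      (by simpa [rC1] using h2)

lemma compl_C2 (β : List σ) : ∀ (p : Q2),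
    (hGrammar bar κ M1 M2).Derives
      [Symbol.nonterminal (HNT.C2 p (M2.evalFrom p β))] (β.map Symbol.terminal) := by
  induction β with
  | nil => intro p; exact (produces_rule (mem_rC2E (bar := bar) (κ := κ) (M1 := M1) p)).single
  | cons b β ih =>
    intro p
    have h2 := (ih (M2.step p b)).append_left [Symbol.terminal b]
    exact (produces_rule (mem_rC2 (bar := bar) (κ := κ) (M1 := M1) p (M2.evalFrom (M2.step p b) β) b)).trans_derives
      (by simpa [rC2] using h2)

lemma compl_B1 (β : List σ) : ∀ (α : List σ) (p : Q1) (j : ℕ), j ≤ α.length → j ≤ κ →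
    (hGrammar bar κ M1 M2).Derives
      [Symbol.nonterminal (HNT.B1 p (M1.evalFrom p (α ++ β ++ ovr bar α)) j)]
      ((α ++ β ++ ovr bar α).map Symbol.terminal) := by
  intro α
  induction α with
  | nil =>
    intro p j hj _
    have hj0 : j = 0 := by simpa using hj
    subst hj0
    simp only [ovr_nil, List.nil_append, List.append_nil]
    exact (produces_rule (mem_rB1C (bar := bar) (κ := κ) (M2 := M2) p (M1.evalFrom p β))).trans_derives
      (by simpa [rB1C] using compl_C1 (bar := bar) (κ := κ) (M2 := M2) β p)
  | cons a α ih =>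
    intro p j hj hjκ
    have hkey : (a :: α) ++ β ++ ovr bar (a :: α) = a :: ((α ++ β ++ ovr bar α) ++ [bar a]) := by
      simp
    rw [hkey]
    have hs : M1.evalFrom p (a :: ((α ++ β ++ ovr bar α) ++ [bar a]))
        = M1.step (M1.evalFrom (M1.step p a) (α ++ β ++ ovr bar α)) (bar a) := by
      rw [evalFrom_cons, DFA.evalFrom_append_singleton]
    rw [hs]
    have hprod := produces_rule
      (mem_rB1 (bar := bar) (M1 := M1) (M2 := M2) p (M1.evalFrom (M1.step p a) (α ++ β ++ ovr bar α)) a j hjκ)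
    refine hprod.trans_derives ?_
    have hw := derives_wrap (a := a) (c := bar a)
      (ih (M1.step p a) (j - 1) (by simp only [List.length_cons] at hj; omega) (by omega))
    simpa [rB1] using hw

lemma compl_B2 (β : List σ) : ∀ (α : List σ) (p : Q2) (j : ℕ), j ≤ α.length → j ≤ κ →
    (hGrammar bar κ M1 M2).Derives
      [Symbol.nonterminal (HNT.B2 p (M2.evalFrom p (α ++ β ++ ovr bar α)) j)]
      ((α ++ β ++ ovr bar α).map Symbol.terminal) := by
  intro α
  induction α with
  | nil =>
    intro p j hj _
    have hj0 : j = 0 := by simpa using hj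
    subst hj0
    simp only [ovr_nil, List.nil_append, List.append_nil]
    exact (produces_rule (mem_rB2C (bar := bar) (κ := κ) (M1 := M1) p (M2.evalFrom p β))).trans_derives
      (by simpa [rB2C] using compl_C2 (bar := bar) (κ := κ) (M1 := M1) β p)
  | cons a α ih =>
    intro p j hj hjκ
    have hkey : (a :: α) ++ β ++ ovr bar (a :: α) = a :: ((α ++ β ++ ovr bar α) ++ [bar a]) := by
      simp
    rw [hkey]
    have hs : M2.evalFrom p (a :: ((α ++ β ++ ovr bar α) ++ [bar a]))
        = M2.step (M2.evalFrom (M2.step p a) (α ++ β ++ ovr bar α)) (bar a) := by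
      rw [evalFrom_cons, DFA.evalFrom_append_singleton]
    rw [hs]
    have hprod := produces_rule
      (mem_rB2 (bar := bar) (M1 := M1) (M2 := M2) p (M2.evalFrom (M2.step p a) (α ++ β ++ ovr bar α)) a j hjκ)
    refine hprod.trans_derives ?_
    have hw := derives_wrap (a := a) (c := bar a)
      (ih (M2.step p a) (j - 1) (by simp only [List.length_cons] at hj; omega) (by omega))
    simpa [rB2] using hw

lemma compl_A1 (α β : List σ) (hκα : κ ≤ α.length) : ∀ (γ : List σ) (p : Q1),
    M1.evalFrom p (γ ++ (α ++ β ++ ovr bar α)) ∈ M1.accept →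
    (hGrammar bar κ M1 M2).Derives [Symbol.nonterminal (HNT.A1 p)]
      ((γ ++ (α ++ β ++ ovr bar α) ++ ovr bar γ).map Symbol.terminal) := by
  intro γ
  induction γ with
  | nil =>
    intro p hacc
    simp only [List.nil_append] at hacc
    refine (produces_rule (mem_rA1B (κ := κ) (M2 := M2) hacc)).trans_derives ?_
    have h2 := compl_B1 (bar := bar) (κ := κ) (M1 := M1) (M2 := M2) β α p κ hκα le_rfl
    simpa [rA1B] using h2
  | cons a γ ih =>
    intro p hacc
    have hacc' : M1.evalFrom (M1.step p a) (γ ++ (α ++ β ++ ovr bar α)) ∈ M1.accept := by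
      simpa using hacc
    refine (produces_rule (mem_rA1 (κ := κ) (M2 := M2) p a)).trans_derives ?_
    have hw := derives_wrap (a := a) (c := bar a) (ih (M1.step p a) hacc')
    have hkey : (a :: γ) ++ (α ++ β ++ ovr bar α) ++ ovr bar (a :: γ)
        = a :: (γ ++ (α ++ β ++ ovr bar α) ++ ovr bar γ) ++ [bar a] := by simp
    rw [hkey]
    simpa [rA1] using hw

lemma compl_A2 (α β : List σ) (hκα : κ ≤ α.length) : ∀ (γ : List σ),
    (hGrammar bar κ M1 M2).Derives
      [Symbol.nonterminal (HNT.A2 (M2.evalFrom M2.start ((α ++ β ++ ovr bar α) ++ ovr bar γ)))]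
      ((γ ++ (α ++ β ++ ovr bar α) ++ ovr bar γ).map Symbol.terminal) := by
  intro γ
  induction γ with
  | nil =>
    simp only [ovr_nil, List.append_nil, List.nil_append]
    refine (produces_rule (mem_rA2B (bar := bar) (M1 := M1)
      (M2.evalFrom M2.start (α ++ β ++ ovr bar α)))).trans_derives ?_
    have h2 := compl_B2 (bar := bar) (κ := κ) (M1 := M1) (M2 := M2) β α M2.start κ hκα le_rfl
    simpa [rA2B] using h2
  | cons a γ ih =>
    have hkey2 : (α ++ β ++ ovr bar α) ++ ovr bar (a :: γ)
        = ((α ++ β ++ ovr bar α) ++ ovr bar γ) ++ [bar a] := by simp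
    rw [hkey2, DFA.evalFrom_append_singleton]
    refine (produces_rule (mem_rA2 (κ := κ) (M1 := M1)
      (M2.evalFrom M2.start ((α ++ β ++ ovr bar α) ++ ovr bar γ)) a)).trans_derives ?_
    have hw := derives_wrap (a := a) (c := bar a) ih
    have hkey : (a :: γ) ++ (α ++ β ++ ovr bar α) ++ ovr bar (a :: γ)
        = a :: (γ ++ (α ++ β ++ ovr bar α) ++ ovr bar γ) ++ [bar a] := by simp
    rw [hkey]
    simpa [rA2] using hw

end HairpinAux

theorem hairpin_completion_linear_context_free
    {σ : Type} [Fintype σ] (hσ : 2 ≤ Fintype.card σ)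
    (bar : σ → σ) (hbar : ∀ a, bar (bar a) = a)
    (κ : ℕ) (hκ : 1 ≤ κ)
    (L1 L2 : Language σ) (h1 : L1.IsRegular) (h2 : L2.IsRegular) :
    ∃ G : ContextFreeGrammar σ,
      G.language = hairpinCompletion bar κ L1 L2 ∧
      ∀ r ∈ G.rules, r.output.countP isNonterminal ≤ 1 := by
  classical
  obtain ⟨Q1, i1, M1, hM1⟩ := h1
  obtain ⟨Q2, i2, M2, hM2⟩ := h2
  refine ⟨HairpinAux.hGrammar bar κ M1 M2, ?_, ?_⟩
  · ext w
    constructor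
    · intro hw
      rw [ContextFreeGrammar.mem_language_iff] at hw
      obtain ⟨n, hd⟩ := HairpinAux.derives_iff_derIn.mp hw
      have hs : w ∈ hairpinCompletion bar κ M1.accepts M2.accepts :=
        HairpinAux.sound n HairpinAux.HNT.S w hd
      rwa [hM1, hM2] at hs
    · rintro ⟨γ, α, β, rfl, hκα, hor⟩
      rw [ContextFreeGrammar.mem_language_iff]
      have hkey : γ ++ α ++ β ++ ovr bar α ++ ovr bar γ
          = γ ++ (α ++ β ++ ovr bar α) ++ ovr bar γ := by simp
      rw [hkey]
      rcases hor with hL | hL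
      · rw [← hM1, DFA.mem_accepts] at hL
        have hacc : M1.evalFrom M1.start (γ ++ (α ++ β ++ ovr bar α)) ∈ M1.accept := by
          simpa [DFA.eval] using hL
        exact (HairpinAux.produces_rule (HairpinAux.mem_rS1 (bar := bar) (κ := κ) (M2 := M2))).trans_derives
          (by simpa [HairpinAux.rS1] using HairpinAux.compl_A1 α β hκα γ M1.start hacc)
      · rw [← hM2, DFA.mem_accepts] at hL
        refine (HairpinAux.produces_rule (HairpinAux.mem_rS2 (bar := bar) (M1 := M1)
          (f := M2.evalFrom M2.start ((α ++ β ++ ovr bar α) ++ ovr bar γ))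
          (by simpa [DFA.eval] using hL))).trans_derives ?_
        simpa [HairpinAux.rS2] using HairpinAux.compl_A2 (M1 := M1) α β hκα γ
  · intro r hr
    rw [HairpinAux.mem_rules_iff] at hr
    rcases hr with rfl | ⟨f, hf, rfl⟩ | ⟨p, a, rfl⟩ | ⟨p, f, hf, rfl⟩ |
      ⟨p, s', a, j, hj, rfl⟩ | ⟨p, s, rfl⟩ | ⟨p, s, b, rfl⟩ | ⟨p, rfl⟩ |
      ⟨s', a, rfl⟩ | ⟨s, rfl⟩ | ⟨p, s', a, j, hj, rfl⟩ | ⟨p, s, rfl⟩ | ⟨p, s, b, rfl⟩ | ⟨p, rfl⟩ <;>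
      simp [HairpinAux.rS1, HairpinAux.rS2, HairpinAux.rA1, HairpinAux.rA1B, HairpinAux.rB1,
        HairpinAux.rB1C, HairpinAux.rC1, HairpinAux.rC1E, HairpinAux.rA2, HairpinAux.rA2B,
        HairpinAux.rB2, HairpinAux.rB2C, HairpinAux.rC2, HairpinAux.rC2E,
        isNonterminal, List.countP_cons, List.countP_nil]
end

section
/- Let A₁ be a deterministic finite automaton with n₁ states accepting L₁ and let A₂ be a deterministic finite automaton with n₂ states accepting overline(L₂) = { overline(w) : w ∈ L₂ }. Then there exists a context-free grammar G generating H_κ(L₁,L₂) such that the right-hand side of every production rule of G contains at most one nonterminal symbol and G has at most (|Σ|^κ + 2·|Σ|)·n₁²·n₂² + n₁·n₂ production rules. -/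
namespace HPC

attribute [local instance] Classical.propDecidable

open ContextFreeGrammar

variable {σ : Type} (bar : σ → σ)

lemma ovr_nil : ovr bar ([] : List σ) = [] := rfl
lemma ovr_append (u v : List σ) : ovr bar (u ++ v) = ovr bar v ++ ovr bar u := by simp [ovr]
lemma ovr_cons (a : σ) (w : List σ) : ovr bar (a :: w) = ovr bar w ++ [bar a] := by simp [ovr]
lemma ovr_single (a : σ) : ovr bar [a] = [bar a] := rfl
lemma ovr_ovr (hbar : ∀ a, bar (bar a) = a) (w : List σ) : ovr bar (ovr bar w) = w := by
  have h : bar ∘ bar = id := funext hbar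
  simp [ovr, List.map_reverse, List.map_map, h]

variable {Q1 Q2 : Type}

/-- Nonterminal type. -/
abbrev NTT (Q1 Q2 : Type) : Type u := ULift ((Q1 × Q2) ⊕ (Q1 × Q1 × Q2 × Q2))

/-- Left-kind nonterminal. -/
@[match_pattern] def NTl {Q1 Q2 : Type} (p : Q1 × Q2) : NTT Q1 Q2 := ⟨Sum.inl p⟩

/-- Right-kind nonterminal. -/
@[match_pattern] def NTr {Q1 Q2 : Type} (x : Q1 × Q1 × Q2 × Q2) : NTT Q1 Q2 := ⟨Sum.inr x⟩

variable (A1 : DFA σ Q1) (A2 : DFA σ Q2) (κ : ℕ)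

def ruleG (p : Q1 × Q2) (a : σ) : ContextFreeRule σ (NTT Q1 Q2) :=
  ⟨NTl p, [Symbol.terminal a,
    Symbol.nonterminal (NTl (A1.step p.1 a, A2.step p.2 a)), Symbol.terminal (bar a)]⟩

def ruleA (p : Q1 × Q2) (s : Q1) (u : Q2) (α : List σ) : ContextFreeRule σ (NTT Q1 Q2) :=
  ⟨NTl p, α.map Symbol.terminal ++
    [Symbol.nonterminal (NTr (A1.evalFrom p.1 α, s, A2.evalFrom p.2 α, u))] ++
    (ovr bar α).map Symbol.terminal⟩

def ruleB (q s : Q1) (t u : Q2) (a : σ) : ContextFreeRule σ (NTT Q1 Q2) :=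
  ⟨NTr (q, s, t, A2.step u (bar a)),
    [Symbol.terminal a, Symbol.nonterminal (NTr (A1.step q a, s, t, u))]⟩

def ruleE (q : Q1) (t : Q2) : ContextFreeRule σ (NTT Q1 Q2) :=
  ⟨NTr (q, q, t, t), []⟩

def accCond (s : Q1) (u : Q2) (α : List σ) : Prop :=
  A1.evalFrom s (ovr bar α) ∈ A1.accept ∨ A2.evalFrom u (ovr bar α) ∈ A2.accept

variable [Fintype σ] [Fintype Q1] [Fintype Q2]

noncomputable def hpcRules : Finset (ContextFreeRule σ (NTT Q1 Q2)) :=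
  (Finset.univ.image fun x : (Q1 × Q2) × σ => ruleG bar A1 A2 x.1 x.2) ∪
  ((Finset.univ.filter
      fun x : (Q1 × Q2) × Q1 × Q2 × List.Vector σ κ =>
        accCond bar A1 A2 x.2.1 x.2.2.1 x.2.2.2.toList).image
      fun x => ruleA bar A1 A2 x.1 x.2.1 x.2.2.1 x.2.2.2.toList) ∪
  (Finset.univ.image
      fun x : (Q1 × Q1 × Q2 × Q2) × σ =>
        ruleB bar A1 A2 x.1.1 x.1.2.1 x.1.2.2.1 x.1.2.2.2 x.2) ∪
  (Finset.univ.image fun x : Q1 × Q2 => (ruleE x.1 x.2 : ContextFreeRule σ (NTT Q1 Q2)))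

@[reducible] noncomputable def hpcGrammar : ContextFreeGrammar σ :=
  ⟨NTT Q1 Q2, NTl (A1.start, A2.start), hpcRules bar A1 A2 κ⟩

/-- The target language expressed via the automata. -/
def Htarget : Language σ :=
  { w | ∃ γ α β : List σ,
      w = γ ++ α ++ β ++ ovr bar α ++ ovr bar γ ∧ α.length = κ ∧
      (γ ++ α ++ β ++ ovr bar α ∈ A1.accepts ∨
        γ ++ α ++ ovr bar β ++ ovr bar α ∈ A2.accepts) }


lemma nonterminal_not_mem {T N : Type*} (X : N) (w : List T) :
    Symbol.nonterminal X ∉ w.map Symbol.terminal := by simp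

lemma terminal_split {T N : Type*} {u v : List T} {p q : List (Symbol T N)} {X Y : N}
    (h : u.map Symbol.terminal ++ [Symbol.nonterminal X] ++ v.map Symbol.terminal
       = p ++ [Symbol.nonterminal Y] ++ q) :
    p = u.map Symbol.terminal ∧ X = Y ∧ q = v.map Symbol.terminal := by
  induction u generalizing p with
  | nil =>
    cases p with
    | nil =>
      simp only [List.map_nil, List.nil_append, List.cons_append] at h
      obtain ⟨h1, h2⟩ := List.cons.inj h
      exact ⟨rfl, (Symbol.nonterminal.inj h1), h2.symm⟩
    | cons s p' =>
      simp only [List.map_nil, List.nil_append, List.cons_append] at h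
      obtain ⟨h1, h2⟩ := List.cons.inj h
      exfalso
      have : Symbol.nonterminal Y ∈ v.map (Symbol.terminal : T → Symbol T N) := by
        rw [h2]; simp
      simpa using this
  | cons a u' ih =>
    cases p with
    | nil =>
      simp only [List.map_cons, List.cons_append, List.nil_append] at h
      obtain ⟨h1, -⟩ := List.cons.inj h
      exact absurd h1 (by simp)
    | cons s p' =>
      simp only [List.map_cons, List.cons_append] at h
      obtain ⟨h1, h2⟩ := List.cons.inj h
      obtain ⟨hp, hXY, hq⟩ := ih h2
      exact ⟨by rw [← h1, hp]; rfl, hXY, hq⟩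
def GoodNT : NTT Q1 Q2 → List σ → List σ → Prop
  | NTl p, u, v => p.1 = A1.eval u ∧ p.2 = A2.eval u ∧ v = ovr bar u
  | NTr x, u, v => ∃ γ α β : List σ,
      u = γ ++ α ++ β ∧ α.length = κ ∧ v = ovr bar α ++ ovr bar γ ∧
      x.1 = A1.eval u ∧ x.2.2.1 = A2.eval (γ ++ α) ∧
      (A1.evalFrom x.2.1 (ovr bar α) ∈ A1.accept ∨
        A2.evalFrom (A2.evalFrom x.2.2.2 (ovr bar β)) (ovr bar α) ∈ A2.accept)

def Good (sf : List (Symbol σ (NTT Q1 Q2))) : Prop :=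
  (∃ w : List σ, sf = w.map Symbol.terminal ∧ w ∈ Htarget bar A1 A2 κ) ∨
  (∃ (X : NTT Q1 Q2) (u v : List σ),
      sf = u.map Symbol.terminal ++ [Symbol.nonterminal X] ++ v.map Symbol.terminal ∧
      GoodNT bar A1 A2 κ X u v)

lemma good_preserved {sf sf' : List (Symbol σ (NTT Q1 Q2))}
    (hg : Good bar A1 A2 κ sf) (hp : (hpcGrammar bar A1 A2 κ).Produces sf sf') :
    Good bar A1 A2 κ sf' := by
  obtain ⟨r, hr, hrw⟩ := hp
  obtain ⟨p, q, hsf, hsf'⟩ := hrw.exists_parts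
  rcases hg with ⟨w, hw, -⟩ | ⟨X, u, v, hform, hgood⟩
  · exfalso
    have : Symbol.nonterminal r.input ∈ w.map (Symbol.terminal : σ → Symbol σ (NTT Q1 Q2)) := by
      rw [← hw, hsf]; simp
    simpa using this
  · rw [hform] at hsf
    obtain ⟨rfl, hXr, rfl⟩ := terminal_split hsf
    simp only [hpcGrammar, hpcRules, Finset.mem_union, Finset.mem_image, Finset.mem_filter,
      Finset.mem_univ, true_and] at hr
    rcases hr with ((⟨x, rfl⟩ | ⟨x, hx, rfl⟩) | ⟨x, rfl⟩) | ⟨x, rfl⟩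
    · -- ruleG
      obtain ⟨p0, a⟩ := x
      simp only [ruleG] at hXr hsf' ⊢
      subst hXr
      obtain ⟨h1, h2, h3⟩ := hgood
      refine Or.inr ⟨NTl (A1.step p0.1 a, A2.step p0.2 a), u ++ [a], bar a :: v, ?_, ?_, ?_, ?_⟩
      · rw [hsf']; simp
      · simp [h1]
      · simp [h2]
      · rw [h3, ovr_append, ovr_single]; rfl
    · -- ruleA
      obtain ⟨p0, s, u2, av⟩ := x
      simp only [ruleA] at hXr hsf' ⊢
      subst hXr
      obtain ⟨h1, h2, h3⟩ := hgood
      refine Or.inr ⟨NTr (A1.evalFrom p0.1 av.toList, s, A2.evalFrom p0.2 av.toList, u2),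
        u ++ av.toList, ovr bar av.toList ++ v, ?_, u, av.toList, [], by simp, ?_, ?_, ?_, ?_, ?_⟩
      · rw [hsf']; simp
      · exact av.toList_length
      · rw [h3]
      · simp only [DFA.eval] at h1 ⊢
        rw [DFA.evalFrom_of_append, ← h1]
      · simp only [DFA.eval] at h2 ⊢
        rw [DFA.evalFrom_of_append, ← h2]
      · simpa [ovr_nil, accCond] using hx
    · -- ruleB
      obtain ⟨⟨q1, s, t, u2⟩, a⟩ := x
      simp only [ruleB] at hXr hsf' ⊢
      subst hXr
      obtain ⟨γ, α, β, hu, hlen, hv, hq, ht, hcond⟩ := hgood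
      dsimp only at hq ht hcond
      refine Or.inr ⟨NTr (A1.step q1 a, s, t, u2), u ++ [a], v, ?_,
        γ, α, β ++ [a], ?_, hlen, hv, ?_, ht, ?_⟩
      · rw [hsf']; simp
      · rw [hu]; simp
      · simp [hq]
      · rcases hcond with h | h
        · exact Or.inl h
        · refine Or.inr ?_
          rw [ovr_append, ovr_single]
          simpa [DFA.evalFrom_of_append] using h
    · -- ruleE
      obtain ⟨q1, t⟩ := x
      simp only [ruleE] at hXr hsf' ⊢
      subst hXr
      obtain ⟨γ, α, β, hu, hlen, hv, hq, ht, hcond⟩ := hgood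
      dsimp only at hq ht hcond
      subst hu
      refine Or.inl ⟨(γ ++ α ++ β) ++ v, ?_, γ, α, β, ?_, hlen, ?_⟩
      · rw [hsf']; simp
      · rw [hv]; simp
      · rcases hcond with h | h
        · refine Or.inl ?_
          rw [DFA.mem_accepts]
          show A1.evalFrom A1.start _ ∈ A1.accept
          rw [show γ ++ α ++ β ++ ovr bar α = (γ ++ α ++ β) ++ ovr bar α from by simp,
            DFA.evalFrom_of_append,
            show A1.evalFrom A1.start (γ ++ α ++ β) = q1 from by rw [hq]; rfl]
          exact h
        · refine Or.inr ?_
          rw [DFA.mem_accepts]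
          show A2.evalFrom A2.start _ ∈ A2.accept
          rw [show γ ++ α ++ ovr bar β ++ ovr bar α = ((γ ++ α) ++ ovr bar β) ++ ovr bar α from by
              simp,
            DFA.evalFrom_of_append, DFA.evalFrom_of_append,
            show A2.evalFrom A2.start (γ ++ α) = t from by rw [ht]; rfl]
          exact h

lemma good_of_derives {sf sf' : List (Symbol σ (NTT Q1 Q2))}
    (h : (hpcGrammar bar A1 A2 κ).Derives sf sf') (hg : Good bar A1 A2 κ sf) :
    Good bar A1 A2 κ sf' := by
  induction h with
  | refl => exact hg
  | tail _ hstep ih => exact good_preserved bar A1 A2 κ ih hstep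

lemma lang_subset_Htarget {w : List σ} (h : w ∈ (hpcGrammar bar A1 A2 κ).language) :
    w ∈ Htarget bar A1 A2 κ := by
  rw [mem_language_iff] at h
  have hinit : Good bar A1 A2 κ [Symbol.nonterminal (hpcGrammar bar A1 A2 κ).initial] := by
    refine Or.inr ⟨NTl (A1.start, A2.start), [], [], by simp [hpcGrammar], rfl, rfl, rfl⟩
  have hg := good_of_derives bar A1 A2 κ h hinit
  rcases hg with ⟨w', hw', hmem⟩ | ⟨X, u, v, hform, -⟩
  · have : w = w' := by
      have := List.map_injective_iff.mpr (fun a b hab => Symbol.terminal.inj hab) hw'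
      exact this
    rwa [this]
  · exfalso
    have : Symbol.nonterminal X ∈ w.map (Symbol.terminal : σ → Symbol σ (NTT Q1 Q2)) := by
      rw [hform]; simp
    simpa using this

lemma derives_gamma (γ : List σ) (p1 : Q1) (p2 : Q2) :
    (hpcGrammar bar A1 A2 κ).Derives [Symbol.nonterminal (NTl (p1, p2))]
      (γ.map Symbol.terminal ++
        [Symbol.nonterminal (NTl (A1.evalFrom p1 γ, A2.evalFrom p2 γ))] ++
        (ovr bar γ).map Symbol.terminal) := by
  induction γ generalizing p1 p2 with
  | nil => simpa [ovr_nil] using Derives.refl _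
  | cons a γ' ih =>
    have hstep : (hpcGrammar bar A1 A2 κ).Produces [Symbol.nonterminal (NTl (p1, p2))]
        ((ruleG bar A1 A2 (p1, p2) a).output) := by
      refine ⟨ruleG bar A1 A2 (p1, p2) a, ?_, ContextFreeRule.Rewrites.input_output⟩
      simp only [hpcGrammar, hpcRules, Finset.mem_union, Finset.mem_image, Finset.mem_univ,
        true_and]
      exact Or.inl (Or.inl (Or.inl ⟨((p1, p2), a), rfl⟩))
    refine hstep.trans_derives ?_
    have := (ih (A1.step p1 a) (A2.step p2 a)).append_left [Symbol.terminal a]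
    have h2 := this.append_right [Symbol.terminal (bar a)]
    have heq : (List.map Symbol.terminal (a :: γ') ++
        [Symbol.nonterminal (NTl (A1.evalFrom p1 (a :: γ'), A2.evalFrom p2 (a :: γ')))] ++
        List.map Symbol.terminal (ovr bar (a :: γ')) : List (Symbol σ (NTT Q1 Q2))) =
        [Symbol.terminal a] ++
          (List.map Symbol.terminal γ' ++
            [Symbol.nonterminal (NTl (A1.evalFrom (A1.step p1 a) γ',
              A2.evalFrom (A2.step p2 a) γ'))] ++
            List.map Symbol.terminal (ovr bar γ')) ++ [Symbol.terminal (bar a)] := by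
      rw [ovr_cons]
      simp [DFA.evalFrom]
    rw [heq]
    simpa [ruleG] using h2
lemma derives_beta (β : List σ) (q s : Q1) (t u2 : Q2) :
    (hpcGrammar bar A1 A2 κ).Derives
      [Symbol.nonterminal (NTr (q, s, t, A2.evalFrom u2 (ovr bar β)))]
      (β.map Symbol.terminal ++ [Symbol.nonterminal (NTr (A1.evalFrom q β, s, t, u2))]) := by
  induction β generalizing q with
  | nil => simpa [ovr_nil] using Derives.refl _
  | cons a β' ih =>
    have hin : A2.evalFrom u2 (ovr bar (a :: β'))
        = A2.step (A2.evalFrom u2 (ovr bar β')) (bar a) := by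
      rw [ovr_cons, DFA.evalFrom_append_singleton]
    rw [hin]
    have hstep : (hpcGrammar bar A1 A2 κ).Produces
        [Symbol.nonterminal (NTr (q, s, t, A2.step (A2.evalFrom u2 (ovr bar β')) (bar a)))]
        ((ruleB bar A1 A2 q s t (A2.evalFrom u2 (ovr bar β')) a).output) := by
      refine ⟨ruleB bar A1 A2 q s t (A2.evalFrom u2 (ovr bar β')) a, ?_,
        ContextFreeRule.Rewrites.input_output⟩
      simp only [hpcGrammar, hpcRules, Finset.mem_union, Finset.mem_image, Finset.mem_univ,
        true_and]
      exact Or.inl (Or.inr ⟨((q, s, t, A2.evalFrom u2 (ovr bar β')), a), rfl⟩)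
    refine hstep.trans_derives ?_
    have := (ih (A1.step q a)).append_left [Symbol.terminal a]
    simp only [ruleB]
    simpa [DFA.evalFrom] using this

lemma Htarget_subset_lang {w : List σ} (h : w ∈ Htarget bar A1 A2 κ) :
    w ∈ (hpcGrammar bar A1 A2 κ).language := by
  obtain ⟨γ, α, β, hw, hlen, hcond⟩ := h
  subst hw
  rw [mem_language_iff]
  have hacc : accCond bar A1 A2
      (A1.evalFrom (A1.evalFrom (A1.evalFrom A1.start γ) α) β)
      (A2.evalFrom (A2.evalFrom (A2.evalFrom A2.start γ) α) (ovr bar β)) α := by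
    rcases hcond with hc | hc
    · left
      rw [DFA.mem_accepts] at hc
      simpa [DFA.eval, DFA.evalFrom_of_append] using hc
    · right
      rw [DFA.mem_accepts] at hc
      simpa [DFA.eval, DFA.evalFrom_of_append] using hc
  have d1 := derives_gamma bar A1 A2 κ γ A1.start A2.start
  have step2 : (hpcGrammar bar A1 A2 κ).Produces
      (γ.map Symbol.terminal ++
        [Symbol.nonterminal (NTl (A1.evalFrom A1.start γ, A2.evalFrom A2.start γ))] ++
        (ovr bar γ).map Symbol.terminal)
      (γ.map Symbol.terminal ++
        (ruleA bar A1 A2 (A1.evalFrom A1.start γ, A2.evalFrom A2.start γ)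
          (A1.evalFrom (A1.evalFrom (A1.evalFrom A1.start γ) α) β)
          (A2.evalFrom (A2.evalFrom (A2.evalFrom A2.start γ) α) (ovr bar β)) α).output ++
        (ovr bar γ).map Symbol.terminal) := by
    refine ⟨ruleA bar A1 A2 (A1.evalFrom A1.start γ, A2.evalFrom A2.start γ)
      (A1.evalFrom (A1.evalFrom (A1.evalFrom A1.start γ) α) β)
      (A2.evalFrom (A2.evalFrom (A2.evalFrom A2.start γ) α) (ovr bar β)) α, ?_,
      ContextFreeRule.rewrites_of_exists_parts _ _ _⟩
    simp only [hpcGrammar, hpcRules, Finset.mem_union, Finset.mem_image, Finset.mem_filter,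
      Finset.mem_univ, true_and]
    exact Or.inl (Or.inl (Or.inr
      ⟨((A1.evalFrom A1.start γ, A2.evalFrom A2.start γ),
        A1.evalFrom (A1.evalFrom (A1.evalFrom A1.start γ) α) β,
        A2.evalFrom (A2.evalFrom (A2.evalFrom A2.start γ) α) (ovr bar β), ⟨α, hlen⟩),
        hacc, rfl⟩))
  have d3 := ((derives_beta bar A1 A2 κ β (A1.evalFrom (A1.evalFrom A1.start γ) α)
      (A1.evalFrom (A1.evalFrom (A1.evalFrom A1.start γ) α) β)
      (A2.evalFrom (A2.evalFrom A2.start γ) α)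
      (A2.evalFrom (A2.evalFrom A2.start γ) α)).append_left
        (γ.map Symbol.terminal ++ α.map Symbol.terminal)).append_right
        ((ovr bar α).map Symbol.terminal ++ (ovr bar γ).map Symbol.terminal)
  have step4 : (hpcGrammar bar A1 A2 κ).Produces
      ((γ.map Symbol.terminal ++ α.map Symbol.terminal ++ β.map Symbol.terminal) ++
        [Symbol.nonterminal (NTr
          (A1.evalFrom (A1.evalFrom (A1.evalFrom A1.start γ) α) β,
           A1.evalFrom (A1.evalFrom (A1.evalFrom A1.start γ) α) β,
           A2.evalFrom (A2.evalFrom A2.start γ) α,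
           A2.evalFrom (A2.evalFrom A2.start γ) α))] ++
        ((ovr bar α).map Symbol.terminal ++ (ovr bar γ).map Symbol.terminal))
      ((γ.map Symbol.terminal ++ α.map Symbol.terminal ++ β.map Symbol.terminal) ++
        (ruleE (A1.evalFrom (A1.evalFrom (A1.evalFrom A1.start γ) α) β)
          (A2.evalFrom (A2.evalFrom A2.start γ) α) :
            ContextFreeRule σ (NTT Q1 Q2)).output ++
        ((ovr bar α).map Symbol.terminal ++ (ovr bar γ).map Symbol.terminal)) := by
    refine ⟨ruleE (A1.evalFrom (A1.evalFrom (A1.evalFrom A1.start γ) α) β)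
      (A2.evalFrom (A2.evalFrom A2.start γ) α), ?_,
      ContextFreeRule.rewrites_of_exists_parts _ _ _⟩
    simp only [hpcGrammar, hpcRules, Finset.mem_union, Finset.mem_image, Finset.mem_filter,
      Finset.mem_univ, true_and]
    exact Or.inr ⟨(A1.evalFrom (A1.evalFrom (A1.evalFrom A1.start γ) α) β,
      A2.evalFrom (A2.evalFrom A2.start γ) α), rfl⟩
  have dmid : (hpcGrammar bar A1 A2 κ).Derives
      [Symbol.nonterminal (NTl ((A1.start : Q1), (A2.start : Q2)))]
      ((γ.map Symbol.terminal ++ α.map Symbol.terminal ++ β.map Symbol.terminal) ++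
        [Symbol.nonterminal (NTr
          (A1.evalFrom (A1.evalFrom (A1.evalFrom A1.start γ) α) β,
           A1.evalFrom (A1.evalFrom (A1.evalFrom A1.start γ) α) β,
           A2.evalFrom (A2.evalFrom A2.start γ) α,
           A2.evalFrom (A2.evalFrom A2.start γ) α))] ++
        ((ovr bar α).map Symbol.terminal ++ (ovr bar γ).map Symbol.terminal)) := by
    refine (d1.trans_produces step2).trans ?_
    simpa [ruleA] using d3
  have dAll := dmid.trans_produces step4
  show (hpcGrammar bar A1 A2 κ).Derives
    [Symbol.nonterminal (NTl ((A1.start : Q1), (A2.start : Q2)))] _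
  simpa [ruleE] using dAll

lemma lang_eq (hbar : ∀ a, bar (bar a) = a) {L1 L2 : Language σ}
    (hA1 : A1.accepts = L1)
    (hA2 : A2.accepts = { w : List σ | ∃ v ∈ L2, w = ovr bar v }) :
    (hpcGrammar bar A1 A2 κ).language = hairpinCompletion bar κ L1 L2 := by
  ext w
  constructor
  · intro hw
    obtain ⟨γ, α, β, hweq, hlen, hcond⟩ := lang_subset_Htarget bar A1 A2 κ hw
    refine ⟨γ, α, β, hweq, hlen.ge, ?_⟩
    rcases hcond with hc | hc
    · exact Or.inl (by rwa [hA1] at hc)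
    · rw [hA2] at hc
      obtain ⟨v, hv, hveq⟩ := hc
      have hv2 := congrArg (ovr bar) hveq
      rw [ovr_ovr bar hbar] at hv2
      have hveq2 : v = α ++ β ++ ovr bar α ++ ovr bar γ := by
        rw [← hv2]
        simp [ovr_append, ovr_ovr bar hbar]
      exact Or.inr (hveq2 ▸ hv)
  · rintro ⟨γ, α, β, hweq, hlen, hcond⟩
    obtain ⟨a1, a2, rfl, hl1⟩ : ∃ a1 a2 : List σ, α = a1 ++ a2 ∧ a1.length = κ :=
      ⟨α.take κ, α.drop κ, (List.take_append_drop κ α).symm, by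
        simp only [List.length_take]; omega⟩
    apply Htarget_subset_lang bar A1 A2 κ
    refine ⟨γ, a1, a2 ++ β ++ ovr bar a2, ?_, hl1, ?_⟩
    · rw [hweq]; simp [ovr_append]
    · have hsplit : γ ++ a1 ++ (a2 ++ β ++ ovr bar a2) ++ ovr bar a1 =
          γ ++ (a1 ++ a2) ++ β ++ ovr bar (a1 ++ a2) := by simp [ovr_append]
      rcases hcond with hc | hc
      · exact Or.inl (by rw [hsplit, hA1]; exact hc)
      · refine Or.inr ?_
        rw [hA2]
        refine ⟨(a1 ++ a2) ++ β ++ ovr bar (a1 ++ a2) ++ ovr bar γ, hc, ?_⟩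
        simp [ovr_append, ovr_ovr bar hbar]

lemma countP_map_terminal (w : List σ) :
    ((w.map (Symbol.terminal : σ → Symbol σ (NTT Q1 Q2))).countP isNonterminal) = 0 := by
  induction w with
  | nil => rfl
  | cons a w ih => simpa [List.countP_cons, isNonterminal] using ih

universe uu

lemma countP_bound : ∀ r ∈ hpcRules.{uu} bar A1 A2 κ,
    (ContextFreeRule.output r).countP isNonterminal ≤ 1 := by
  intro r hr
  simp only [hpcRules, Finset.mem_union, Finset.mem_image, Finset.mem_filter,
    Finset.mem_univ, true_and] at hr
  rcases hr with ((⟨x, rfl⟩ | ⟨x, hx, rfl⟩) | ⟨x, rfl⟩) | ⟨x, rfl⟩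
  · simp [ruleG, List.countP_cons, isNonterminal]
  · have hz : ∀ l : List σ, List.countP
        (isNonterminal ∘ (Symbol.terminal : σ → Symbol σ (NTT.{uu} Q1 Q2))) l = 0 := by
      intro l; induction l with
      | nil => rfl
      | cons a l ih => simpa [List.countP_cons, isNonterminal] using ih
    simp [ruleA, List.countP_append, List.countP_cons, isNonterminal, hz]
  · simp [ruleB, List.countP_cons, isNonterminal]
  · simp [ruleE, isNonterminal]

lemma card_bound :
    (hpcRules bar A1 A2 κ).card ≤
      (Fintype.card σ ^ κ + 2 * Fintype.card σ) *
        (Fintype.card Q1) ^ 2 * (Fintype.card Q2) ^ 2 +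
      Fintype.card Q1 * Fintype.card Q2 := by
  haveI : Nonempty Q1 := ⟨A1.start⟩
  haveI : Nonempty Q2 := ⟨A2.start⟩
  set n1 := Fintype.card Q1
  set n2 := Fintype.card Q2
  set m := Fintype.card σ
  have h1 : 1 ≤ n1 := Fintype.card_pos
  have h2 : 1 ≤ n2 := Fintype.card_pos
  have c1 : (Finset.univ.image fun x : (Q1 × Q2) × σ =>
      ruleG bar A1 A2 x.1 x.2).card ≤ n1 * n2 * m := by
    refine le_trans Finset.card_image_le ?_
    simp [Finset.card_univ, mul_assoc]
    exact le_rfl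
  have c2 : ((Finset.univ.filter
      fun x : (Q1 × Q2) × Q1 × Q2 × List.Vector σ κ =>
        accCond bar A1 A2 x.2.1 x.2.2.1 x.2.2.2.toList).image
      fun x => ruleA bar A1 A2 x.1 x.2.1 x.2.2.1 x.2.2.2.toList).card ≤
      n1 * n2 * (n1 * (n2 * m ^ κ)) := by
    refine le_trans Finset.card_image_le (le_trans (Finset.card_filter_le _ _) ?_)
    simp [Finset.card_univ, mul_assoc]
    exact le_rfl
  have c3 : (Finset.univ.image
      fun x : (Q1 × Q1 × Q2 × Q2) × σ =>
        ruleB bar A1 A2 x.1.1 x.1.2.1 x.1.2.2.1 x.1.2.2.2 x.2).card ≤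
      n1 * (n1 * (n2 * n2)) * m := by
    refine le_trans Finset.card_image_le ?_
    simp [Finset.card_univ, mul_assoc]
    exact le_rfl
  have c4 : (Finset.univ.image fun x : Q1 × Q2 =>
      (ruleE x.1 x.2 : ContextFreeRule σ (NTT Q1 Q2))).card ≤ n1 * n2 := by
    refine le_trans Finset.card_image_le ?_
    simp [Finset.card_univ]
    exact le_rfl
  calc (hpcRules bar A1 A2 κ).card
      ≤ n1 * n2 * m + n1 * n2 * (n1 * (n2 * m ^ κ)) + n1 * (n1 * (n2 * n2)) * m
          + n1 * n2 := by
        refine le_trans (@Finset.card_union_le _ (fun a b => @instDecidableEqContextFreeRule _ _ (fun _ _ => Classical.propDecidable _) (fun _ _ => Classical.propDecidable _) a b) _ _) ?_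
        refine add_le_add (le_trans (@Finset.card_union_le _ (fun a b => @instDecidableEqContextFreeRule _ _ (fun _ _ => Classical.propDecidable _) (fun _ _ => Classical.propDecidable _) a b) _ _) ?_) c4
        refine add_le_add (le_trans (@Finset.card_union_le _ (fun a b => @instDecidableEqContextFreeRule _ _ (fun _ _ => Classical.propDecidable _) (fun _ _ => Classical.propDecidable _) a b) _ _) ?_) c3
        exact add_le_add c1 c2
    _ ≤ (m ^ κ + 2 * m) * n1 ^ 2 * n2 ^ 2 + n1 * n2 := by
        have e : (m ^ κ + 2 * m) * n1 ^ 2 * n2 ^ 2 =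
            n1 * n2 * (n1 * (n2 * m ^ κ)) + n1 * (n1 * (n2 * n2)) * m +
              n1 ^ 2 * n2 ^ 2 * m := by ring
        have key : n1 * n2 ≤ n1 ^ 2 * n2 ^ 2 :=
          Nat.mul_le_mul (Nat.le_self_pow two_ne_zero n1) (Nat.le_self_pow two_ne_zero n2)
        have t1 : n1 * n2 * m ≤ n1 ^ 2 * n2 ^ 2 * m := Nat.mul_le_mul_right m key
        rw [e]
        linarith [t1, key]

end HPC

theorem hairpin_completion_linear_grammar_size
    {σ : Type} [Fintype σ] (hσ : 2 ≤ Fintype.card σ)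
    (bar : σ → σ) (hbar : ∀ a, bar (bar a) = a)
    (κ : ℕ) (hκ : 1 ≤ κ)
    (L1 L2 : Language σ)
    (Q1 Q2 : Type) [Fintype Q1] [Fintype Q2]
    (A1 : DFA σ Q1) (A2 : DFA σ Q2)
    (hA1 : A1.accepts = L1)
    (hA2 : A2.accepts = { w : List σ | ∃ v ∈ L2, w = ovr bar v }) :
    ∃ G : ContextFreeGrammar σ,
      G.language = hairpinCompletion bar κ L1 L2 ∧
      (∀ r ∈ G.rules, r.output.countP isNonterminal ≤ 1) ∧
      G.rules.card ≤
        (Fintype.card σ ^ κ + 2 * Fintype.card σ) *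
          (Fintype.card Q1) ^ 2 * (Fintype.card Q2) ^ 2 +
        Fintype.card Q1 * Fintype.card Q2 := by
  refine ⟨HPC.hpcGrammar bar A1 A2 κ, ?_, ?_, ?_⟩
  · exact HPC.lang_eq bar A1 A2 κ hbar hA1 hA2
  · exact HPC.countP_bound bar A1 A2 κ
  · exact HPC.card_bound bar A1 A2 κ
end

section
/- Let L₁ and L₂ be languages over Σ. Every word π ∈ H_κ(L₁,L₂) admits a unique triple of words (γ, α, β) such that: (1) π = γ·α·β·overline(α)·overline(γ); (2) |α| = κ; (3) γ·α·β·overline(α) ∈ L₁ or α·β·overline(α)·overline(γ) ∈ L₂; (4) every prefix of π that belongs to L₁ is a prefix of γ·α·β·overline(α); and (5) every suffix of π that belongs to L₂ is a suffix of α·β·overline(α)·overline(γ). -/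
/-- The canonical factorization `(γ, α, β)` of a word `π` of the hairpin completion. -/
def CanonFact {σ : Type} (bar : σ → σ) (κ : ℕ) (L1 L2 : Language σ)
    (π γ α β : List σ) : Prop :=
  π = γ ++ α ++ β ++ ovr bar α ++ ovr bar γ ∧
  α.length = κ ∧
  (γ ++ α ++ β ++ ovr bar α ∈ L1 ∨ α ++ β ++ ovr bar α ++ ovr bar γ ∈ L2) ∧
  (∀ u : List σ, u <+: π → u ∈ L1 → u <+: γ ++ α ++ β ++ ovr bar α) ∧
  (∀ u : List σ, u <:+ π → u ∈ L2 → u <:+ α ++ β ++ ovr bar α ++ ovr bar γ)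

namespace HairpinAux

variable {σ : Type} (bar : σ → σ)

lemma ovr_length (w : List σ) : (ovr bar w).length = w.length := by simp [ovr]

lemma ovr_append (x y : List σ) : ovr bar (x ++ y) = ovr bar y ++ ovr bar x := by
  simp [ovr]

lemma ovr_drop (w : List σ) {m : ℕ} (h : m ≤ w.length) :
    (ovr bar w).drop (w.length - m) = ovr bar (w.take m) := by
  conv_lhs => rw [← List.take_append_drop m w, ovr_append]
  apply List.drop_left'
  simp only [ovr, List.length_reverse, List.length_map, List.length_drop,
    List.length_append, List.length_take]
  omega

lemma mirror {π w b : List σ} {m : ℕ} (h : π = w ++ b ++ ovr bar w)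
    (hm : m ≤ w.length) :
    π.drop (π.length - m) = ovr bar (π.take m) := by
  have hlen : π.length = w.length + b.length + w.length := by
    have := congrArg List.length h
    simp [ovr] at this; omega
  have htake : π.take m = w.take m := by
    rw [h, List.append_assoc, List.take_append_of_le_length hm]
  have hidx : π.length - m = (w ++ b).length + (w.length - m) := by
    simp; omega
  have hdrop : π.drop (π.length - m) = (ovr bar w).drop (w.length - m) := by
    rw [hidx, h, List.drop_length_add_append]
  rw [hdrop, ovr_drop bar w hm, htake]

/-- `Good g`: there is a hairpin factorization of `π` with `|γ| = g` and `|α| = κ`. -/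
def Good (κ : ℕ) (L1 L2 : Language σ) (π : List σ) (g : ℕ) : Prop :=
  ∃ γ α β : List σ, γ.length = g ∧ α.length = κ ∧
    π = γ ++ α ++ β ++ ovr bar α ++ ovr bar γ ∧
    (γ ++ α ++ β ++ ovr bar α ∈ L1 ∨ α ++ β ++ ovr bar α ++ ovr bar γ ∈ L2)

lemma good_shrink {κ : ℕ} {L1 L2 : Language σ} {π : List σ} {g g' : ℕ}
    (hg : Good bar κ L1 L2 π g) (hle : g' ≤ g)
    (hmem : π.take (π.length - g') ∈ L1 ∨ π.drop g' ∈ L2) :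
    Good bar κ L1 L2 π g' := by
  obtain ⟨γ, α, β, hγ, hα, hπ, -⟩ := hg
  have hw : π = (γ ++ α) ++ β ++ ovr bar (γ ++ α) := by
    rw [hπ, ovr_append]; simp [List.append_assoc]
  have hwl : (γ ++ α).length = g + κ := by simp [hγ, hα]
  have hπl : π.length = (g + κ) + β.length + (g + κ) := by
    have := congrArg List.length hw
    simp [ovr, hγ, hα] at this; omega
  set a := g' + κ with ha
  have haw : a ≤ (γ ++ α).length := by omega
  set γ' := π.take g' with hγ'd
  set α' := (π.take a).drop g' with hα'd
  set β' := (π.take (π.length - a)).drop a with hβ'd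
  have hga : γ' ++ α' = π.take a := by
    have h1 : (π.take a).take g' = π.take g' := by
      rw [List.take_take]; congr 1; omega
    rw [hγ'd, hα'd, ← h1, List.take_append_drop]
  have hmir : π.drop (π.length - a) = ovr bar (γ' ++ α') := by
    rw [hga]; exact mirror bar hw haw
  have hsplit3 : π = (γ' ++ α' ++ β') ++ π.drop (π.length - a) := by
    rw [List.append_assoc, hga, hβ'd]
    have h2 : (π.take (π.length - a)).take a = π.take a := by
      rw [List.take_take]; congr 1; omega
    conv_lhs => rw [← List.take_append_drop (π.length - a) π,
      ← List.take_append_drop a (π.take (π.length - a))]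
    rw [h2, List.append_assoc]
  have hsplit : π = γ' ++ α' ++ β' ++ ovr bar α' ++ ovr bar γ' := by
    rw [hmir, ovr_append] at hsplit3
    simpa [List.append_assoc] using hsplit3
  have hγl : γ'.length = g' := by simp [hγ'd]; omega
  have hαl : α'.length = κ := by simp [hα'd]; omega
  refine ⟨γ', α', β', hγl, hαl, hsplit, ?_⟩
  have hXlen : (γ' ++ α' ++ β' ++ ovr bar α').length = π.length - g' := by
    have := congrArg List.length hsplit
    simp [ovr] at this ⊢
    omega
  rcases hmem with h | h
  · left
    have he := List.take_left' (l₂ := ovr bar γ') hXlen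
    rw [← hsplit] at he
    rwa [he] at h
  · right
    have e' : π = γ' ++ (α' ++ β' ++ ovr bar α' ++ ovr bar γ') := by
      rw [hsplit]; simp only [List.append_assoc]
    have he : π.drop g' = α' ++ β' ++ ovr bar α' ++ ovr bar γ' := by
      rw [e', List.drop_left' hγl]
    rwa [he] at h

lemma good_of_mem {κ : ℕ} {L1 L2 : Language σ} {π : List σ}
    (hπ : π ∈ hairpinCompletion bar κ L1 L2) :
    ∃ g, Good bar κ L1 L2 π g := by
  obtain ⟨γ, α, β, hpi, hκα, hmem⟩ := hπ
  have e1 : γ ++ α.take κ ++ (α.drop κ ++ β ++ ovr bar (α.drop κ)) ++ ovr bar (α.take κ)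
      = γ ++ α ++ β ++ ovr bar α := by
    conv_rhs => rw [← List.take_append_drop κ α]
    simp only [ovr_append, List.append_assoc]
  have e2 : α.take κ ++ (α.drop κ ++ β ++ ovr bar (α.drop κ)) ++ ovr bar (α.take κ) ++ ovr bar γ
      = α ++ β ++ ovr bar α ++ ovr bar γ := by
    conv_rhs => rw [← List.take_append_drop κ α]
    simp only [ovr_append, List.append_assoc]
  refine ⟨γ.length, γ, α.take κ, α.drop κ ++ β ++ ovr bar (α.drop κ), rfl, ?_, ?_, ?_⟩
  · rw [List.length_take]; omega
  · rw [show γ ++ α.take κ ++ (α.drop κ ++ β ++ ovr bar (α.drop κ)) ++ ovr bar (α.take κ)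
        ++ ovr bar γ
        = (γ ++ α.take κ ++ (α.drop κ ++ β ++ ovr bar (α.drop κ)) ++ ovr bar (α.take κ))
        ++ ovr bar γ by simp only [List.append_assoc], e1, hpi]
  · rw [e1, e2]; exact hmem

lemma suffix_of_suffix_length_le {l₁ l₂ l₃ : List σ}
    (h1 : l₁ <:+ l₃) (h2 : l₂ <:+ l₃) (h : l₁.length ≤ l₂.length) : l₁ <:+ l₂ := by
  have := List.prefix_of_prefix_length_le (List.reverse_prefix.mpr h1)
    (List.reverse_prefix.mpr h2) (by simpa using h)
  exact List.reverse_prefix.mp this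

end HairpinAux

open HairpinAux in
theorem hairpin_completion_unique_canonical_factorization
    {σ : Type} [Fintype σ] (hσ : 2 ≤ Fintype.card σ)
    (bar : σ → σ) (hbar : ∀ a, bar (bar a) = a)
    (κ : ℕ) (hκ : 1 ≤ κ)
    (L1 L2 : Language σ)
    (π : List σ) (hπ : π ∈ hairpinCompletion bar κ L1 L2) :
    ∃! t : List σ × List σ × List σ,
      CanonFact bar κ L1 L2 π t.1 t.2.1 t.2.2 := by
  classical
  have hex : ∃ g, Good bar κ L1 L2 π g := good_of_mem bar hπ
  set g₀ := Nat.find hex with hg₀d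
  have hg₀ : Good bar κ L1 L2 π g₀ := Nat.find_spec hex
  obtain ⟨γ₀, α₀, β₀, hγ₀, hα₀, hsplit, hmem₀⟩ := id hg₀
  have hL : π.length = g₀ + κ + β₀.length + κ + g₀ := by
    have := congrArg List.length hsplit
    simp [ovr, hγ₀, hα₀] at this; omega
  have hXlen : (γ₀ ++ α₀ ++ β₀ ++ ovr bar α₀).length = π.length - g₀ := by
    simp [ovr, hγ₀, hα₀]; omega
  have hX : π.take (π.length - g₀) = γ₀ ++ α₀ ++ β₀ ++ ovr bar α₀ := by
    have he := List.take_left' (l₂ := ovr bar γ₀) hXlen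
    rwa [← hsplit] at he
  have hY : π.drop g₀ = α₀ ++ β₀ ++ ovr bar α₀ ++ ovr bar γ₀ := by
    have e' : π = γ₀ ++ (α₀ ++ β₀ ++ ovr bar α₀ ++ ovr bar γ₀) := by
      rw [hsplit]; simp only [List.append_assoc]
    rw [e', List.drop_left' hγ₀]
  refine ⟨(γ₀, α₀, β₀), ⟨hsplit, hα₀, hmem₀, ?_, ?_⟩, ?_⟩
  · -- prefix maximality
    intro u hu hu1
    have hul : u.length ≤ π.length := hu.length_le
    by_cases hcase : u.length ≤ π.length - g₀
    · have hpre : u <+: π.take (π.length - g₀) :=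
        List.prefix_of_prefix_length_le hu (List.take_prefix _ _) (by simp; omega)
      rwa [hX] at hpre
    · exfalso
      push_neg at hcase
      set g' := π.length - u.length with hg'd
      have hg'lt : g' < g₀ := by omega
      have hu' : π.take (π.length - g') = u := by
        have : u = π.take u.length := List.prefix_iff_eq_take.mp hu
        rw [show π.length - g' = u.length by omega, ← this]
      have : Good bar κ L1 L2 π g' :=
        good_shrink bar hg₀ (le_of_lt hg'lt) (Or.inl (by rwa [hu']))
      exact Nat.find_min hex hg'lt this
  · -- suffix maximality
    intro u hu hu2
    have hul : u.length ≤ π.length := hu.length_le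
    by_cases hcase : u.length ≤ π.length - g₀
    · have hsuf : u <:+ π.drop g₀ :=
        suffix_of_suffix_length_le hu (List.drop_suffix _ _) (by simp; omega)
      rwa [hY] at hsuf
    · exfalso
      push_neg at hcase
      set g' := π.length - u.length with hg'd
      have hg'lt : g' < g₀ := by omega
      have hu' : π.drop g' = u := by
        have : u = π.drop (π.length - u.length) := List.suffix_iff_eq_drop.mp hu
        rw [← hg'd] at this
        exact this.symm
      have : Good bar κ L1 L2 π g' :=
        good_shrink bar hg₀ (le_of_lt hg'lt) (Or.inr (by rwa [hu']))
      exact Nat.find_min hex hg'lt this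
  · -- uniqueness
    rintro ⟨γ, α, β⟩ ⟨h1, h2, h3, h4, h5⟩
    have hGood : Good bar κ L1 L2 π γ.length := ⟨γ, α, β, rfl, h2, h1, h3⟩
    have hle : g₀ ≤ γ.length := Nat.find_min' hex hGood
    have hL' : π.length = γ.length + κ + β.length + κ + γ.length := by
      have := congrArg List.length h1
      simp [ovr, h2] at this; omega
    have hγeq : γ.length = g₀ := by
      by_contra hne
      have hlt : g₀ < γ.length := lt_of_le_of_ne hle (Ne.symm hne)
      rcases hmem₀ with hm | hm
      · have hpre : (γ₀ ++ α₀ ++ β₀ ++ ovr bar α₀) <+: π :=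
          ⟨ovr bar γ₀, hsplit.symm⟩
        have hple := (h4 _ hpre hm).length_le
        have hylen : (γ ++ α ++ β ++ ovr bar α).length = π.length - γ.length := by
          simp [ovr, h2]; omega
        rw [hXlen, hylen] at hple
        omega
      · have hsuf : (α₀ ++ β₀ ++ ovr bar α₀ ++ ovr bar γ₀) <:+ π :=
          ⟨γ₀, by rw [hsplit]; simp [List.append_assoc]⟩
        have hsle := (h5 _ hsuf hm).length_le
        have hxlen : (α₀ ++ β₀ ++ ovr bar α₀ ++ ovr bar γ₀).length = π.length - g₀ := by
          simp [ovr, hγ₀, hα₀]; omega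
        have hylen : (α ++ β ++ ovr bar α ++ ovr bar γ).length = π.length - γ.length := by
          simp [ovr, h2]; omega
        rw [hxlen, hylen] at hsle
        omega
    have e : γ ++ (α ++ (β ++ (ovr bar α ++ ovr bar γ)))
        = γ₀ ++ (α₀ ++ (β₀ ++ (ovr bar α₀ ++ ovr bar γ₀))) := by
      have := h1.symm.trans hsplit
      simpa [List.append_assoc] using this
    obtain ⟨eγ, e2⟩ := List.append_inj e (by rw [hγeq, hγ₀])
    obtain ⟨eα, e3⟩ := List.append_inj e2 (by rw [h2, hα₀])
    obtain ⟨eβ, -⟩ := List.append_inj' e3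
      (by simp [ovr, eγ, eα])
    simp [Prod.ext_iff]
    exact ⟨eγ, eα, eβ⟩
end

section
/- Let L₁ and L₂ be regular languages over Σ. Then the language MGP(L₁,L₂) of minimal gamma-alpha-prefixes of words of H_κ(L₁,L₂) is regular. -/
/-- The language of minimal gamma-alpha-prefixes of words of the hairpin completion. -/
def MGP {σ : Type} (bar : σ → σ) (κ : ℕ) (L1 L2 : Language σ) : Language σ :=
  { p | ∃ π γ α β : List σ, π ∈ hairpinCompletion bar κ L1 L2 ∧
      CanonFact bar κ L1 L2 π γ α β ∧ p = γ ++ α }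

/-- The language of middle factors of canonical factorizations of words
of the hairpin completion. -/
def Mid {σ : Type} (bar : σ → σ) (κ : ℕ) (L1 L2 : Language σ) : Language σ :=
  { β | ∃ π γ α : List σ, π ∈ hairpinCompletion bar κ L1 L2 ∧
      CanonFact bar κ L1 L2 π γ α β }

namespace MGPAux

open List

variable {σ : Type}

theorem prefix_append_cases {u x y : List σ} (h : u <+: x ++ y) :
    u <+: x ∨ ∃ v, v <+: y ∧ u = x ++ v := by
  rcases List.prefix_or_prefix_of_prefix h (List.prefix_append x y) with h' | h'
  · exact Or.inl h'
  · obtain ⟨v, rfl⟩ := h'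
    exact Or.inr ⟨v, (List.prefix_append_right_inj x).1 h, rfl⟩

theorem suffix_append_cases {u x y : List σ} (h : u <:+ x ++ y) :
    u <:+ y ∨ ∃ w, w <:+ x ∧ u = w ++ y := by
  rcases List.suffix_or_suffix_of_suffix h (List.suffix_append x y) with h' | h'
  · exact Or.inl h'
  · obtain ⟨w, rfl⟩ := h'
    refine Or.inr ⟨w, ?_, rfl⟩
    have h2 : (w ++ y).reverse <+: (x ++ y).reverse := List.reverse_prefix.2 h
    simp only [List.reverse_append] at h2
    exact List.reverse_prefix.1 ((List.prefix_append_right_inj y.reverse).1 h2)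

theorem minimal_prefix_iff (L : Language σ) (x y : List σ) :
    (∀ u, u <+: x ++ y → u ∈ L → u <+: x) ↔
      (∀ v, v <+: y → v ≠ [] → x ++ v ∉ L) := by
  constructor
  · intro h v hv hne hmem
    have hp : x ++ v <+: x := h (x ++ v) ((List.prefix_append_right_inj x).2 hv) hmem
    have := hp.length_le
    simp only [List.length_append] at this
    have : v.length = 0 := by omega
    exact hne (List.length_eq_zero_iff.1 this)
  · intro h u hu hmem
    rcases prefix_append_cases hu with h' | ⟨v, hv, rfl⟩
    · exact h'
    · rcases eq_or_ne v [] with rfl | hne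
      · simp
      · exact absurd hmem (h v hv hne)

theorem minimal_suffix_iff (L : Language σ) (x y : List σ) :
    (∀ u, u <:+ x ++ y → u ∈ L → u <:+ y) ↔
      (∀ w, w <:+ x → w ≠ [] → w ++ y ∉ L) := by
  constructor
  · intro h w hw hne hmem
    have hwy : w ++ y <:+ x ++ y := by
      obtain ⟨t, rfl⟩ := hw
      exact ⟨t, by simp⟩
    have hp : w ++ y <:+ y := h (w ++ y) hwy hmem
    have := hp.length_le
    simp only [List.length_append] at this
    have : w.length = 0 := by omega
    exact hne (List.length_eq_zero_iff.1 this)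
  · intro h u hu hmem
    rcases suffix_append_cases hu with h' | ⟨w, hw, rfl⟩
    · exact h'
    · rcases eq_or_ne w [] with rfl | hne
      · simp
      · exact absurd hmem (h w hw hne)

/-- Concrete characterization of the canonical-factorization conditions. -/
def Cond (bar : σ → σ) (κ : ℕ) (L1 L2 : Language σ) (γ α β : List σ) : Prop :=
  α.length = κ ∧
  (γ ++ α ++ β ++ ovr bar α ∈ L1 ∨ α ++ β ++ ovr bar α ++ ovr bar γ ∈ L2) ∧
  (∀ v, v <+: ovr bar γ → v ≠ [] → (γ ++ α ++ β ++ ovr bar α) ++ v ∉ L1) ∧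
  (∀ w, w <:+ γ → w ≠ [] → w ++ (α ++ β ++ ovr bar α ++ ovr bar γ) ∉ L2)

theorem mem_MGP_iff (bar : σ → σ) (κ : ℕ) (L1 L2 : Language σ) (p : List σ) :
    p ∈ MGP bar κ L1 L2 ↔ ∃ γ α β, p = γ ++ α ∧ Cond bar κ L1 L2 γ α β := by
  have hassoc : ∀ γ α β : List σ,
      γ ++ α ++ β ++ ovr bar α ++ ovr bar γ =
        γ ++ (α ++ β ++ ovr bar α ++ ovr bar γ) := by
    intro γ α β; simp [List.append_assoc]
  constructor
  · rintro ⟨π, γ, α, β, _, ⟨hπ, hlen, hmem, hpre, hsuf⟩, rfl⟩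
    subst hπ
    refine ⟨γ, α, β, rfl, hlen, hmem, ?_, ?_⟩
    · exact (minimal_prefix_iff L1 (γ ++ α ++ β ++ ovr bar α) (ovr bar γ)).1 hpre
    · refine (minimal_suffix_iff L2 γ (α ++ β ++ ovr bar α ++ ovr bar γ)).1 ?_
      intro u hu
      exact hsuf u (by rw [← hassoc γ α β] at hu; exact hu)
  · rintro ⟨γ, α, β, rfl, hlen, hmem, hB, hC⟩
    refine ⟨γ ++ α ++ β ++ ovr bar α ++ ovr bar γ, γ, α, β,
      ⟨γ, α, β, rfl, by rw [hlen], hmem⟩, ⟨rfl, hlen, hmem, ?_, ?_⟩, rfl⟩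
    · exact (minimal_prefix_iff L1 (γ ++ α ++ β ++ ovr bar α) (ovr bar γ)).2 hB
    · intro u hu
      exact (minimal_suffix_iff L2 γ (α ++ β ++ ovr bar α ++ ovr bar γ)).2 hC u
        (by rw [hassoc γ α β] at hu; exact hu)

variable {Q1 Q2 : Type} (bar : σ → σ) (M1 : DFA σ Q1) (M2 : DFA σ Q2)

/-- One step of the "main" automaton (processing γ). -/
def mStep (m : Q1 × (Q1 → Prop) × Set Q2 × (Q2 → Q2)) (b : σ) :
    Q1 × (Q1 → Prop) × Set Q2 × (Q2 → Q2) :=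
  ⟨M1.step m.1 b,
   fun q => M1.step q (bar b) ∈ M1.accept ∨ m.2.1 (M1.step q (bar b)),
   (fun s => M2.step s b) '' insert M2.start m.2.2.1,
   fun q => m.2.2.2 (M2.step q (bar b))⟩

/-- The intended value of the main automaton after reading γ. -/
def mVal (γ : List σ) : Q1 × (Q1 → Prop) × Set Q2 × (Q2 → Q2) :=
  ⟨M1.eval γ,
   fun q => ∃ v, v <+: ovr bar γ ∧ v ≠ [] ∧ M1.evalFrom q v ∈ M1.accept,
   {s | ∃ w, w <:+ γ ∧ w ≠ [] ∧ M2.evalFrom M2.start w = s},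
   fun q => M2.evalFrom q (ovr bar γ)⟩

theorem ovr_snoc (γ : List σ) (b : σ) :
    ovr bar (γ ++ [b]) = bar b :: ovr bar γ := by
  simp [ovr]

theorem mVal_nil : mVal bar M1 M2 [] = ⟨M1.start, fun _ => False, ∅, id⟩ := by
  refine Prod.ext rfl (Prod.ext ?_ (Prod.ext ?_ ?_))
  · funext q
    simp only [mVal, eq_iff_iff]
    constructor
    · rintro ⟨v, hv, hne, -⟩
      simp [ovr] at hv
      exact hne hv
    · exact fun h => h.elim
  · ext s
    simp only [mVal, Set.mem_setOf_eq, Set.mem_empty_iff_false, iff_false]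
    rintro ⟨w, hw, hne, -⟩
    exact hne (List.suffix_nil.1 hw)
  · funext q
    simp [mVal, ovr]

theorem mVal_snoc (γ : List σ) (b : σ) :
    mVal bar M1 M2 (γ ++ [b]) = mStep bar M1 M2 (mVal bar M1 M2 γ) b := by
  refine Prod.ext ?_ (Prod.ext ?_ (Prod.ext ?_ ?_))
  · simp [mVal, mStep]
  · funext q
    simp only [mVal, mStep, ovr_snoc, eq_iff_iff]
    constructor
    · rintro ⟨v, hv, hne, hacc⟩
      rcases v with _ | ⟨c, v'⟩
      · exact absurd rfl hne
      · obtain ⟨rfl, hv'⟩ := List.cons_prefix_cons.1 hv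
        rcases eq_or_ne v' [] with rfl | hne'
        · exact Or.inl (by simpa using hacc)
        · exact Or.inr ⟨v', hv', hne', hacc⟩
    · rintro (h | ⟨v', hv', hne', hacc⟩)
      · exact ⟨[bar b], List.cons_prefix_cons.2 ⟨rfl, List.nil_prefix⟩,
          by simp, by simpa using h⟩
      · exact ⟨bar b :: v', List.cons_prefix_cons.2 ⟨rfl, hv'⟩, by simp, hacc⟩
  · ext s
    simp only [mVal, mStep, Set.mem_setOf_eq, Set.mem_image, Set.mem_insert_iff]
    constructor
    · rintro ⟨w, hw, hne, rfl⟩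
      rcases suffix_append_cases hw with h' | ⟨w', hw', rfl⟩
      · rcases List.suffix_cons_iff.1 h' with rfl | h''
        · exact ⟨M2.start, Or.inl rfl, by simp⟩
        · exact absurd (List.suffix_nil.1 h'') hne
      · rcases eq_or_ne w' [] with rfl | hne'
        · exact ⟨M2.start, Or.inl rfl, by simp⟩
        · exact ⟨M2.evalFrom M2.start w', Or.inr ⟨w', hw', hne', rfl⟩, by simp⟩
    · rintro ⟨s', (rfl | ⟨w', hw', hne', rfl⟩), rfl⟩
      · exact ⟨[b], ⟨γ, rfl⟩, by simp, by simp⟩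
      · obtain ⟨t, rfl⟩ := hw'
        exact ⟨w' ++ [b], ⟨t, by simp⟩, by simp, by simp⟩
  · funext q
    simp [mVal, mStep, ovr_snoc, DFA.evalFrom]

/-- The acceptance condition on a main state together with the buffer `α`. -/
def AccP (m : Q1 × (Q1 → Prop) × Set Q2 × (Q2 → Q2)) (α : List σ) : Prop :=
  ∃ β : List σ,
    (M1.evalFrom m.1 (α ++ β ++ ovr bar α) ∈ M1.accept ∨
      m.2.2.2 (M2.eval (α ++ β ++ ovr bar α)) ∈ M2.accept) ∧
    ¬ m.2.1 (M1.evalFrom m.1 (α ++ β ++ ovr bar α)) ∧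
    ∀ s ∈ m.2.2.1, m.2.2.2 (M2.evalFrom s (α ++ β ++ ovr bar α)) ∉ M2.accept

variable (κ : ℕ)

/-- The full DFA: main state plus a buffer of the last at most `κ` letters. -/
def fullDFA :
    DFA σ ((Q1 × (Q1 → Prop) × Set Q2 × (Q2 → Q2)) × {l : List σ // l.length ≤ κ}) where
  step := fun s a =>
    if h : s.2.val.length < κ then
      ⟨s.1, ⟨s.2.val ++ [a], by simp; omega⟩⟩
    else
      match s with
      | ⟨m, ⟨[], _⟩⟩ => ⟨m, ⟨[], by simp⟩⟩
      | ⟨m, ⟨b :: rest, hr⟩⟩ =>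
          ⟨mStep bar M1 M2 m b, ⟨rest ++ [a], by simp at hr ⊢; omega⟩⟩
  start := ⟨mVal bar M1 M2 [], ⟨[], by simp⟩⟩
  accept := {s | s.2.val.length = κ ∧ AccP bar M1 M2 s.1 s.2.val}

theorem fullDFA_step_small (m : Q1 × (Q1 → Prop) × Set Q2 × (Q2 → Q2))
    (l : List σ) (hle : l.length ≤ κ) (h : l.length < κ) (a : σ) :
    (fullDFA bar M1 M2 κ).step ⟨m, ⟨l, hle⟩⟩ a = ⟨m, ⟨l ++ [a], by simp; omega⟩⟩ := by
  simp only [fullDFA]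
  rw [dif_pos h]

theorem fullDFA_step_full (m : Q1 × (Q1 → Prop) × Set Q2 × (Q2 → Q2))
    (b : σ) (rest : List σ) (hle : (b :: rest).length ≤ κ)
    (h : ¬ (b :: rest).length < κ) (a : σ) :
    (fullDFA bar M1 M2 κ).step ⟨m, ⟨b :: rest, hle⟩⟩ a =
      ⟨mStep bar M1 M2 m b, ⟨rest ++ [a], by simp at hle ⊢; omega⟩⟩ := by
  simp only [fullDFA]
  rw [dif_neg h]

theorem fullDFA_eval (hκ : 1 ≤ κ) (p : List σ) :
    ((fullDFA bar M1 M2 κ).eval p).1 = mVal bar M1 M2 (p.take (p.length - κ)) ∧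
      ((fullDFA bar M1 M2 κ).eval p).2.val = p.drop (p.length - κ) := by
  induction p using List.reverseRecOn with
  | nil => refine ⟨?_, ?_⟩ <;> simp <;> rfl
  | append_singleton p a ih =>
      obtain ⟨ih1, ih2⟩ := ih
      rw [DFA.eval_append_singleton]
      rcases hs : (fullDFA bar M1 M2 κ).eval p with ⟨m, l, hl⟩
      rw [hs] at ih1 ih2
      simp only at ih1 ih2
      by_cases hn : p.length < κ
      · have h0 : p.length - κ = 0 := by omega
        have h0' : (p ++ [a]).length - κ = 0 := by simp; omega
        have hllt : l.length < κ := by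
          rw [ih2, List.length_drop]; omega
        rw [fullDFA_step_small bar M1 M2 κ m l hl hllt a]
        refine ⟨?_, ?_⟩
        · show m = _
          rw [ih1, h0, h0']
          simp
        · show l ++ [a] = _
          rw [ih2, h0, h0']
          simp
      · push_neg at hn
        have hidx : p.length - κ < p.length := by omega
        have hdrop : p.drop (p.length - κ) =
            p[p.length - κ] :: p.drop (p.length - κ + 1) :=
          List.drop_eq_getElem_cons hidx
        have hllen : l.length = κ := by
          rw [ih2, List.length_drop]; omega
        rcases l with _ | ⟨b, rest⟩
        · exact absurd hllen (by simp; omega)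
        · have hb : b = p[p.length - κ] ∧ rest = p.drop (p.length - κ + 1) := by
            have := ih2.trans hdrop
            exact ⟨by injection this, by injection this⟩
          obtain ⟨hb1, hb2⟩ := hb
          rw [fullDFA_step_full bar M1 M2 κ m b rest hl (by omega) a]
          have h1 : (p ++ [a]).length - κ = p.length - κ + 1 := by simp; omega
          have htake : p.take (p.length - κ) ++ [p[p.length - κ]] =
              p.take (p.length - κ + 1) := by
            rw [List.take_succ, List.getElem?_eq_getElem hidx]
            rfl
          refine ⟨?_, ?_⟩
          · show mStep bar M1 M2 m b = _
            rw [ih1, ← mVal_snoc, hb1, htake, h1,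
              List.take_append_of_le_length (by omega)]
          · show rest ++ [a] = _
            rw [hb2, h1, List.drop_append_of_le_length (by omega)]

theorem mem_fullDFA (hκ : 1 ≤ κ) (p : List σ) :
    p ∈ (fullDFA bar M1 M2 κ).accepts ↔
      κ ≤ p.length ∧
        AccP bar M1 M2 (mVal bar M1 M2 (p.take (p.length - κ)))
          (p.drop (p.length - κ)) := by
  obtain ⟨h1, h2⟩ := fullDFA_eval bar M1 M2 κ hκ p
  rw [DFA.mem_accepts]
  show ((fullDFA bar M1 M2 κ).eval p).2.val.length = κ ∧
      AccP bar M1 M2 ((fullDFA bar M1 M2 κ).eval p).1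
        ((fullDFA bar M1 M2 κ).eval p).2.val ↔ _
  rw [h1, h2, List.length_drop]
  constructor
  · rintro ⟨ha, hb⟩; exact ⟨by omega, hb⟩
  · rintro ⟨ha, hb⟩; exact ⟨by omega, hb⟩

theorem accP_mVal_iff (L1 L2 : Language σ) (hM1 : M1.accepts = L1)
    (hM2 : M2.accepts = L2) (γ α : List σ) :
    AccP bar M1 M2 (mVal bar M1 M2 γ) α ↔
      ∃ β, (γ ++ α ++ β ++ ovr bar α ∈ L1 ∨
              α ++ β ++ ovr bar α ++ ovr bar γ ∈ L2) ∧
        (∀ v, v <+: ovr bar γ → v ≠ [] → (γ ++ α ++ β ++ ovr bar α) ++ v ∉ L1) ∧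
        (∀ w, w <:+ γ → w ≠ [] → w ++ (α ++ β ++ ovr bar α ++ ovr bar γ) ∉ L2) := by
  subst hM1 hM2
  refine exists_congr fun β => ?_
  have e1 : M1.evalFrom (mVal bar M1 M2 γ).1 (α ++ β ++ ovr bar α) =
      M1.eval (γ ++ α ++ β ++ ovr bar α) := by
    show M1.evalFrom (M1.eval γ) _ = _
    rw [DFA.eval, ← DFA.evalFrom_of_append]
    congr 1
    simp [List.append_assoc]
  have e2 : (mVal bar M1 M2 γ).2.2.2 (M2.eval (α ++ β ++ ovr bar α)) =
      M2.eval (α ++ β ++ ovr bar α ++ ovr bar γ) := by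
    show M2.evalFrom (M2.eval (α ++ β ++ ovr bar α)) (ovr bar γ) = _
    rw [DFA.eval, ← DFA.evalFrom_of_append]
  have hmem1 : ∀ x : List σ, x ∈ M1.accepts ↔ M1.eval x ∈ M1.accept :=
    fun x => DFA.mem_accepts M1
  have hmem2 : ∀ x : List σ, x ∈ M2.accepts ↔ M2.eval x ∈ M2.accept :=
    fun x => DFA.mem_accepts M2
  constructor
  · rintro ⟨hA, hB, hC⟩
    refine ⟨?_, ?_, ?_⟩
    · rcases hA with h | h
      · exact Or.inl ((hmem1 _).2 (e1 ▸ h))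
      · exact Or.inr ((hmem2 _).2 (e2 ▸ h))
    · intro v hv hne hmemL
      refine hB ?_
      rw [e1]
      refine ⟨v, hv, hne, ?_⟩
      have : M1.evalFrom (M1.eval (γ ++ α ++ β ++ ovr bar α)) v =
          M1.eval ((γ ++ α ++ β ++ ovr bar α) ++ v) := by
        rw [DFA.eval, ← DFA.evalFrom_of_append]
      rw [this]
      exact (hmem1 _).1 hmemL
    · intro w hw hne hmemL
      refine hC (M2.evalFrom M2.start w) ⟨w, hw, hne, rfl⟩ ?_
      show M2.evalFrom (M2.evalFrom (M2.evalFrom M2.start w) (α ++ β ++ ovr bar α))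
          (ovr bar γ) ∈ M2.accept
      rw [← DFA.evalFrom_of_append, ← DFA.evalFrom_of_append]
      exact (hmem2 _).1 hmemL
  · rintro ⟨hA, hB, hC⟩
    refine ⟨?_, ?_, ?_⟩
    · rcases hA with h | h
      · exact Or.inl (e1 ▸ (hmem1 _).1 h)
      · exact Or.inr (e2 ▸ (hmem2 _).1 h)
    · rw [e1]
      rintro ⟨v, hv, hne, hacc⟩
      refine hB v hv hne ((hmem1 _).2 ?_)
      rw [DFA.eval, DFA.evalFrom_of_append]
      exact hacc
    · rintro s ⟨w, hw, hne, rfl⟩ hacc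
      refine hC w hw hne ((hmem2 _).2 ?_)
      show M2.evalFrom M2.start (w ++ (α ++ β ++ ovr bar α ++ ovr bar γ)) ∈ M2.accept
      have : w ++ (α ++ β ++ ovr bar α ++ ovr bar γ) =
          (w ++ (α ++ β ++ ovr bar α)) ++ ovr bar γ := by
        simp [List.append_assoc]
      rw [this, DFA.evalFrom_of_append, DFA.evalFrom_of_append]
      exact hacc

end MGPAux

theorem mgp_regular
    {σ : Type} [Fintype σ] (hσ : 2 ≤ Fintype.card σ)
    (bar : σ → σ) (hbar : ∀ a, bar (bar a) = a)
    (κ : ℕ) (hκ : 1 ≤ κ)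
    (L1 L2 : Language σ) (h1 : L1.IsRegular) (h2 : L2.IsRegular) :
    (MGP bar κ L1 L2).IsRegular := by
  classical
  obtain ⟨Q1, i1, M1, hM1⟩ := h1
  obtain ⟨Q2, i2, M2, hM2⟩ := h2
  haveI : Fintype {l : List σ // l.length ≤ κ} := by
    refine Fintype.ofInjective (fun l (i : Fin κ) => l.val[i.val]?) ?_
    intro l l' h
    apply Subtype.ext
    apply List.ext_getElem?
    intro n
    by_cases hn : n < κ
    · exact congrFun h ⟨n, hn⟩
    · rw [List.getElem?_eq_none (by omega : l.val.length ≤ n),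
        List.getElem?_eq_none (by omega : l'.val.length ≤ n)]
  refine ⟨_, inferInstance, MGPAux.fullDFA bar M1 M2 κ, ?_⟩
  ext p
  rw [MGPAux.mem_fullDFA bar M1 M2 κ hκ, MGPAux.mem_MGP_iff]
  constructor
  · rintro ⟨hlen, hAcc⟩
    obtain ⟨β, hA, hB, hC⟩ :=
      (MGPAux.accP_mVal_iff bar M1 M2 L1 L2 hM1 hM2 _ _).1 hAcc
    exact ⟨p.take (p.length - κ), p.drop (p.length - κ), β,
      (List.take_append_drop _ p).symm, by rw [List.length_drop]; omega,
      hA, hB, hC⟩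
  · rintro ⟨γ, α, β, rfl, hlen, hA, hB, hC⟩
    have hn : (γ ++ α).length - κ = γ.length := by simp; omega
    have ht : (γ ++ α).take ((γ ++ α).length - κ) = γ := by
      rw [hn]; exact List.take_left' rfl
    have hd : (γ ++ α).drop ((γ ++ α).length - κ) = α := by
      rw [hn]; exact List.drop_left' rfl
    refine ⟨by simp; omega, ?_⟩
    rw [ht, hd]
    exact (MGPAux.accP_mVal_iff bar M1 M2 L1 L2 hM1 hM2 γ α).2 ⟨β, hA, hB, hC⟩
end

section
/- Let L₁ and L₂ be regular languages over Σ. Then the language Mid(L₁,L₂) consisting of all words β that occur as the middle factor of the canonical factorization of some word of H_κ(L₁,L₂) is regular. -/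
/- Auxiliary lemmas -/

lemma prefix_cases' {σ : Type} {u w z : List σ} (h : u <+: w ++ z) :
    u <+: w ∨ ∃ v, v <+: z ∧ v ≠ [] ∧ u = w ++ v := by
  rcases le_or_gt u.length w.length with hl | hl
  · exact Or.inl (List.prefix_of_prefix_length_le h (w.prefix_append z) hl)
  · have hw : w <+: u := List.prefix_of_prefix_length_le (w.prefix_append z) h hl.le
    obtain ⟨v, rfl⟩ := hw
    refine Or.inr ⟨v, (List.prefix_append_right_inj w).mp h, ?_, rfl⟩
    rintro rfl
    simp at hl

lemma suffix_cases' {σ : Type} {u w z : List σ} (h : u <:+ w ++ z) :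
    u <:+ z ∨ ∃ v, v <:+ w ∧ v ≠ [] ∧ u = v ++ z := by
  have h' : u.reverse <+: z.reverse ++ w.reverse := by
    simpa [List.reverse_append] using h.reverse
  rcases prefix_cases' h' with h1 | ⟨v, hv, hvne, heq⟩
  · exact Or.inl (List.reverse_prefix.mp h1)
  · refine Or.inr ⟨v.reverse, ?_, by simpa using hvne, ?_⟩
    · exact List.reverse_prefix.mp (by simpa using hv)
    · rw [← List.reverse_reverse u, heq]
      simp

lemma mid_iff {σ : Type} (bar : σ → σ) (κ : ℕ) (L1 L2 : Language σ) (β : List σ) :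
    β ∈ Mid bar κ L1 L2 ↔ ∃ γ α : List σ, α.length = κ ∧
      (γ ++ α ++ β ++ ovr bar α ∈ L1 ∨ α ++ β ++ ovr bar α ++ ovr bar γ ∈ L2) ∧
      (∀ v, v <+: ovr bar γ → v ≠ [] → γ ++ α ++ β ++ ovr bar α ++ v ∉ L1) ∧
      (∀ v, v <:+ γ → v ≠ [] → v ++ (α ++ β ++ ovr bar α ++ ovr bar γ) ∉ L2) := by
  constructor
  · rintro ⟨π, γ, α, hH, hπ, hlen, hmem, hpre, hsuf⟩
    refine ⟨γ, α, hlen, hmem, ?_, ?_⟩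
    · intro v hv hvne hL
      have hup : γ ++ α ++ β ++ ovr bar α ++ v <+: π := by
        rw [hπ]; exact (List.prefix_append_right_inj _).mpr hv
      have hle := (hpre _ hup hL).length_le
      simp only [List.length_append] at hle
      exact hvne (List.length_eq_zero_iff.mp (by omega))
    · intro v hv hvne hL
      have hup : v ++ (α ++ β ++ ovr bar α ++ ovr bar γ) <:+ π := by
        rw [hπ]
        obtain ⟨t, rfl⟩ := hv
        exact ⟨t, by simp [List.append_assoc]⟩
      have hle := (hsuf _ hup hL).length_le
      simp only [List.length_append] at hle
      exact hvne (List.length_eq_zero_iff.mp (by omega))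
  · rintro ⟨γ, α, hlen, hmem, hB, hC⟩
    refine ⟨γ ++ α ++ β ++ ovr bar α ++ ovr bar γ, γ, α,
      ⟨γ, α, β, rfl, hlen ▸ le_rfl, hmem⟩, rfl, hlen, hmem, ?_, ?_⟩
    · intro u hu hL
      rcases prefix_cases' hu with h | ⟨v, hv, hvne, rfl⟩
      · exact h
      · exact absurd hL (hB v hv hvne)
    · intro u hu hL
      have hu' : u <:+ γ ++ (α ++ β ++ ovr bar α ++ ovr bar γ) := by
        simpa [List.append_assoc] using hu
      rcases suffix_cases' hu' with h | ⟨v, hv, hvne, rfl⟩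
      · exact h
      · exact absurd hL (hC v hv hvne)

/-- Product "transition monoid" DFA. -/
def prodFunDFA {σ Q1 Q2 : Type} (M1 : DFA σ Q1) (M2 : DFA σ Q2)
    (acc : (Q1 → Q1) × (Q2 → Q2) → Prop) : DFA σ ((Q1 → Q1) × (Q2 → Q2)) where
  step p a := (fun q => M1.step (p.1 q) a, fun q => M2.step (p.2 q) a)
  start := (id, id)
  accept := { p | acc p }

lemma DFA.eval_append' {σ Q : Type} (M : DFA σ Q) (x y : List σ) :
    M.eval (x ++ y) = M.evalFrom (M.eval x) y :=
  M.evalFrom_of_append M.start x y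

lemma prodFunDFA_evalFrom {σ Q1 Q2 : Type} (M1 : DFA σ Q1) (M2 : DFA σ Q2)
    (acc : (Q1 → Q1) × (Q2 → Q2) → Prop) (w : List σ) :
    ∀ f g, (prodFunDFA M1 M2 acc).evalFrom (f, g) w =
      (fun q => M1.evalFrom (f q) w, fun q => M2.evalFrom (g q) w) := by
  induction w with
  | nil => intro f g; rfl
  | cons a w ih => intro f g; exact ih _ _

theorem mid_regular
    {σ : Type} [Fintype σ] (hσ : 2 ≤ Fintype.card σ)
    (bar : σ → σ) (hbar : ∀ a, bar (bar a) = a)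
    (κ : ℕ) (hκ : 1 ≤ κ)
    (L1 L2 : Language σ) (h1 : L1.IsRegular) (h2 : L2.IsRegular) :
    (Mid bar κ L1 L2).IsRegular := by
  obtain ⟨Q1, hF1, M1, rfl⟩ := h1
  obtain ⟨Q2, hF2, M2, rfl⟩ := h2
  haveI := Classical.decEq Q1
  haveI := Classical.decEq Q2
  set acc : (Q1 → Q1) × (Q2 → Q2) → Prop := fun p => ∃ γ α : List σ, α.length = κ ∧
      (M1.evalFrom (p.1 (M1.eval (γ ++ α))) (ovr bar α) ∈ M1.accept ∨
        M2.evalFrom (p.2 (M2.eval α)) (ovr bar α ++ ovr bar γ) ∈ M2.accept) ∧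
      (∀ v, v <+: ovr bar γ → v ≠ [] →
        M1.evalFrom (p.1 (M1.eval (γ ++ α))) (ovr bar α ++ v) ∉ M1.accept) ∧
      (∀ v, v <:+ γ → v ≠ [] →
        M2.evalFrom (p.2 (M2.eval (v ++ α))) (ovr bar α ++ ovr bar γ) ∉ M2.accept) with hacc
  refine ⟨(Q1 → Q1) × (Q2 → Q2), inferInstance, prodFunDFA M1 M2 acc, ?_⟩
  ext β
  rw [DFA.mem_accepts]
  have hev : (prodFunDFA M1 M2 acc).eval β =
      (fun q => M1.evalFrom q β, fun q => M2.evalFrom q β) := by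
    exact prodFunDFA_evalFrom M1 M2 acc β id id
  rw [hev, mid_iff]
  show acc _ ↔ _
  rw [hacc]
  simp only [DFA.mem_accepts, DFA.eval_append', DFA.evalFrom_of_append]
end

section
/- Let L₁ and L₂ be regular languages over Σ. If the language MGP(L₁,L₂) of minimal gamma-alpha-prefixes is infinite and, in addition, L₁ is finite or L₂ is finite, then the hairpin completion H_κ(L₁,L₂) is not regular. -/
section Aux
variable {σ : Type} (bar : σ → σ)

lemma ovr_append (u v : List σ) : ovr bar (u ++ v) = ovr bar v ++ ovr bar u := by
  simp [ovr]

@[simp] lemma ovr_length (u : List σ) : (ovr bar u).length = u.length := by simp [ovr]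

@[simp] lemma ovr_nil : ovr bar ([] : List σ) = [] := rfl

lemma ovr_ovr (hbar : ∀ a, bar (bar a) = a) (u : List σ) : ovr bar (ovr bar u) = u := by
  simp [ovr, List.map_reverse, List.map_map, Function.comp_def, hbar]

lemma take_ovr (γ : List σ) (t : ℕ) :
    (ovr bar γ).take t = ovr bar (γ.drop (γ.length - t)) := by
  simp [ovr, List.take_reverse, ← List.map_drop]

lemma drop_ovr (γ : List σ) (t : ℕ) :
    (ovr bar γ).drop t = ovr bar (γ.take (γ.length - t)) := by
  simp [ovr, List.drop_reverse, ← List.map_take]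

lemma ovr_suffix_of_prefix {u w : List σ} (h : u <+: w) : ovr bar u <:+ ovr bar w := by
  obtain ⟨t, rfl⟩ := h
  exact ⟨ovr bar t, (ovr_append bar u t).symm⟩

lemma ovr_prefix_of_suffix {u w : List σ} (h : u <:+ w) : ovr bar u <+: ovr bar w := by
  obtain ⟨t, rfl⟩ := h
  exact ⟨ovr bar t, (ovr_append bar t u).symm⟩

lemma rebalance (κ : ℕ) (s α β : List σ) (h : κ ≤ s.length + α.length) :
    ∃ α' β' : List σ, α'.length = κ ∧
      s ++ (α ++ (β ++ (ovr bar α ++ ovr bar s))) = α' ++ (β' ++ ovr bar α') := by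
  refine ⟨(s ++ α).take κ, (s ++ α).drop κ ++ β ++ ovr bar ((s ++ α).drop κ), by
    simp; omega, ?_⟩
  have key : ∀ u v w : List σ, u ++ (v ++ (w ++ (ovr bar v ++ ovr bar u)))
      = (u ++ v) ++ w ++ ovr bar (u ++ v) := by
    intros; simp [ovr_append, List.append_assoc]
  rw [show ((s ++ α).drop κ ++ β ++ ovr bar ((s ++ α).drop κ)) = ((s ++ α).drop κ ++ (β ++ ovr bar ((s ++ α).drop κ))) by simp [List.append_assoc]]
  rw [show ((s ++ α).take κ ++ (((s ++ α).drop κ ++ (β ++ ovr bar ((s ++ α).drop κ))) ++ ovr bar ((s ++ α).take κ))) = ((s ++ α).take κ ++ ((s ++ α).drop κ ++ (β ++ (ovr bar ((s++α).drop κ) ++ ovr bar ((s++α).take κ))))) by simp [List.append_assoc]]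
  rw [key, key, List.take_append_drop]

end Aux

section Canon
variable {σ : Type} {bar : σ → σ} {κ : ℕ} {L1 L2 : Language σ}

lemma toCanon :
    ∀ (g : ℕ) (γ α β π : List σ), γ.length = g → α.length = κ →
    π = γ ++ α ++ β ++ ovr bar α ++ ovr bar γ →
    (γ ++ α ++ β ++ ovr bar α ∈ L1 ∨ α ++ β ++ ovr bar α ++ ovr bar γ ∈ L2) →
    ∃ γ' α' β', CanonFact bar κ L1 L2 π γ' α' β' := by
  intro g
  induction g using Nat.strong_induction_on with
  | _ g IH =>
  intro γ α β π hg hα hform hdisj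
  have hlen : π.length = γ.length + α.length + β.length + α.length + γ.length := by
    simp [hform]; omega
  by_cases hP4 : ∀ u : List σ, u <+: π → u ∈ L1 → u <+: γ ++ α ++ β ++ ovr bar α
  · by_cases hP5 : ∀ u : List σ,
        u <:+ π → u ∈ L2 → u <:+ α ++ β ++ ovr bar α ++ ovr bar γ
    · exact ⟨γ, α, β, hform, hα, hdisj, hP4, hP5⟩
    · -- suffix violation
      push_neg at hP5
      obtain ⟨v, hvπ, hvL2, hvn⟩ := hP5
      have hπV : π = γ ++ (α ++ β ++ ovr bar α ++ ovr bar γ) := by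
        rw [hform]; simp [List.append_assoc]
      have hVs : (α ++ β ++ ovr bar α ++ ovr bar γ) <:+ π := ⟨γ, hπV.symm⟩
      have hlt : (α ++ β ++ ovr bar α ++ ovr bar γ).length < v.length := by
        by_contra hle
        exact hvn (List.suffix_of_suffix_length_le hvπ hVs (by omega))
      have hvlen : v.length ≤ π.length := hvπ.length_le
      set t : ℕ := v.length - (α ++ β ++ ovr bar α ++ ovr bar γ).length with ht
      have hVlen : (α ++ β ++ ovr bar α ++ ovr bar γ).length
          = α.length + β.length + α.length + γ.length := by simp; omega
      have ht1 : 1 ≤ t := by omega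
      have ht2 : t ≤ γ.length := by omega
      set γ' : List σ := γ.take (γ.length - t) with hγ'
      set s : List σ := γ.drop (γ.length - t) with hs
      have hγγ : γ = γ' ++ s := (List.take_append_drop _ _).symm
      have hslen : s.length = t := by simp [hs]; omega
      have hv : v = s ++ (α ++ β ++ ovr bar α ++ ovr bar γ) := by
        have h1 : v = π.drop (π.length - v.length) := List.suffix_iff_eq_drop.mp hvπ
        have h2 : π.length - v.length = γ.length - t := by
          simp only [List.length_append, ovr_length] at *
          omega
        rw [h1, h2, hπV, List.drop_append_of_le_length (by omega)]
      obtain ⟨α', β', hα', hre⟩ := rebalance bar κ s α β (by omega)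
      have hre2 : s ++ (α ++ (β ++ (ovr bar α ++ (ovr bar s ++ ovr bar γ'))))
          = α' ++ (β' ++ (ovr bar α' ++ ovr bar γ')) := by
        have := congrArg (· ++ ovr bar γ') hre
        simpa [List.append_assoc] using this
      have hos : ovr bar γ = ovr bar s ++ ovr bar γ' := by
        rw [hγγ, ovr_append]
      have hv2 : v = α' ++ β' ++ ovr bar α' ++ ovr bar γ' := by
        rw [hv, hos]
        simp only [List.append_assoc]
        rw [hre2]
      have hπ2 : π = γ' ++ α' ++ β' ++ ovr bar α' ++ ovr bar γ' := by
        have hgv : π = γ' ++ v := by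
          rw [hπV, hv]
          conv_rhs => rw [← List.append_assoc, ← hγγ]
        rw [hgv, hv2]; simp [List.append_assoc]
      have hγ'len : γ'.length < g := by
        simp only [hγ', List.length_take]; omega
      exact IH γ'.length hγ'len γ' α' β' π rfl hα' hπ2 (Or.inr (hv2 ▸ hvL2))
  · -- prefix violation
    push_neg at hP4
    obtain ⟨u, huπ, huL1, hun⟩ := hP4
    have hπW : π = (γ ++ α ++ β ++ ovr bar α) ++ ovr bar γ := hform
    have hWp : (γ ++ α ++ β ++ ovr bar α) <+: π := ⟨ovr bar γ, hπW.symm⟩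
    have hlt : (γ ++ α ++ β ++ ovr bar α).length < u.length := by
      by_contra hle
      exact hun (List.prefix_of_prefix_length_le huπ hWp (by omega))
    have hulen : u.length ≤ π.length := huπ.length_le
    set t : ℕ := u.length - (γ ++ α ++ β ++ ovr bar α).length with ht
    have hWlen : (γ ++ α ++ β ++ ovr bar α).length
        = γ.length + α.length + β.length + α.length := by simp; omega
    have ht1 : 1 ≤ t := by omega
    have ht2 : t ≤ γ.length := by omega
    set γ' : List σ := γ.take (γ.length - t) with hγ'
    set s : List σ := γ.drop (γ.length - t) with hs
    have hγγ : γ = γ' ++ s := (List.take_append_drop _ _).symm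
    have hslen : s.length = t := by simp [hs]; omega
    have hu : u = (γ ++ α ++ β ++ ovr bar α) ++ ovr bar s := by
      have h1 : u = π.take u.length := List.prefix_iff_eq_take.mp huπ
      have h2 : u.length = (γ ++ α ++ β ++ ovr bar α).length + t := by omega
      rw [h1, h2, hπW, List.take_append, take_ovr]
      rw [List.take_of_length_le (by omega), Nat.add_sub_cancel_left]
    obtain ⟨α', β', hα', hre⟩ := rebalance bar κ s α β (by omega)
    have hu2 : u = γ' ++ α' ++ β' ++ ovr bar α' := by
      rw [hu]
      conv_lhs => rw [hγγ]
      simp only [List.append_assoc]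
      rw [hre]
    have hπ2 : π = γ' ++ α' ++ β' ++ ovr bar α' ++ ovr bar γ' := by
      have hos : ovr bar γ = ovr bar s ++ ovr bar γ' := by
        rw [hγγ, ovr_append]
      have hπu : π = u ++ ovr bar γ' := by
        rw [hπW, hos, hu]; simp [List.append_assoc]
      rw [hπu, hu2]
    have hγ'len : γ'.length < g := by
      simp only [hγ', List.length_take]; omega
    exact IH γ'.length hγ'len γ' α' β' π rfl hα' hπ2 (Or.inl (hu2 ▸ huL1))

lemma exists_canonFact {π : List σ} (hπ : π ∈ hairpinCompletion bar κ L1 L2) :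
    ∃ γ α β, CanonFact bar κ L1 L2 π γ α β := by
  obtain ⟨γ, α, β, hform, hκα, hdisj⟩ := hπ
  obtain ⟨α', β', hα', hre⟩ := rebalance bar κ ([] : List σ) α β (by simpa using hκα)
  simp only [List.nil_append, ovr_nil, List.append_nil] at hre
  have hre2 : α ++ (β ++ (ovr bar α ++ ovr bar γ))
      = α' ++ (β' ++ (ovr bar α' ++ ovr bar γ)) := by
    have := congrArg (· ++ ovr bar γ) hre
    simpa [List.append_assoc] using this
  have hform' : π = γ ++ α' ++ β' ++ ovr bar α' ++ ovr bar γ := by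
    rw [hform]
    simp only [List.append_assoc]
    rw [hre2]
  have hdisj' : γ ++ α' ++ β' ++ ovr bar α' ∈ L1 ∨
      α' ++ β' ++ ovr bar α' ++ ovr bar γ ∈ L2 := by
    rcases hdisj with h | h
    · left
      have : γ ++ α ++ β ++ ovr bar α = γ ++ α' ++ β' ++ ovr bar α' := by
        simp only [List.append_assoc]; rw [hre]
      rwa [this] at h
    · right
      have : α ++ β ++ ovr bar α ++ ovr bar γ = α' ++ β' ++ ovr bar α' ++ ovr bar γ := by
        have := congrArg (· ++ ovr bar γ) hre
        simpa [List.append_assoc] using this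
      rwa [this] at h
  exact toCanon γ.length γ α' β' π rfl hα' hform' hdisj'

end Canon

section Pump
variable {σ : Type}

lemma dfa_evalFrom_append {q : Type} (M : DFA σ q) (st : q) (a b : List σ) :
    M.evalFrom st (a ++ b) = M.evalFrom (M.evalFrom st a) b := by
  simp [DFA.evalFrom, List.foldl_append]

lemma exists_loop {qa qb : Type} [Fintype qa] [Fintype qb]
    (A : DFA σ qa) (B : DFA σ qb) (π : List σ)
    (h : Fintype.card qa * Fintype.card qb ≤ π.length) :
    ∃ x y z : List σ, π = x ++ y ++ z ∧ y ≠ [] ∧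
      x.length + y.length ≤ Fintype.card qa * Fintype.card qb ∧
      (∀ s, A.eval (x ++ s) = A.eval (x ++ (y ++ s))) ∧
      (∀ s, B.eval (x ++ s) = B.eval (x ++ (y ++ s))) := by
  set N := Fintype.card qa * Fintype.card qb with hN
  have main : ∀ j k : ℕ, j < k → k ≤ N →
      A.eval (π.take j) = A.eval (π.take k) →
      B.eval (π.take j) = B.eval (π.take k) →
      ∃ x y z : List σ, π = x ++ y ++ z ∧ y ≠ [] ∧
        x.length + y.length ≤ N ∧
        (∀ s, A.eval (x ++ s) = A.eval (x ++ (y ++ s))) ∧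
        (∀ s, B.eval (x ++ s) = B.eval (x ++ (y ++ s))) := by
    intro j k hlt hkN hAe hBe
    have hxy : π.take j ++ (π.take k).drop j = π.take k := by
      rw [show π.take j = (π.take k).take j by rw [List.take_take]; congr 1; omega]
      rw [List.take_append_drop]
    have hAs : ∀ s, A.eval (π.take j ++ s) = A.eval (π.take j ++ ((π.take k).drop j ++ s)) := by
      intro s
      rw [show π.take j ++ ((π.take k).drop j ++ s)
          = (π.take j ++ (π.take k).drop j) ++ s by simp [List.append_assoc]]
      rw [hxy]
      unfold DFA.eval
      rw [dfa_evalFrom_append, dfa_evalFrom_append]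
      show A.evalFrom (A.eval _) s = A.evalFrom (A.eval _) s
      rw [hAe]
    have hBs : ∀ s, B.eval (π.take j ++ s) = B.eval (π.take j ++ ((π.take k).drop j ++ s)) := by
      intro s
      rw [show π.take j ++ ((π.take k).drop j ++ s)
          = (π.take j ++ (π.take k).drop j) ++ s by simp [List.append_assoc]]
      rw [hxy]
      unfold DFA.eval
      rw [dfa_evalFrom_append, dfa_evalFrom_append]
      show B.evalFrom (B.eval _) s = B.evalFrom (B.eval _) s
      rw [hBe]
    refine ⟨π.take j, (π.take k).drop j, π.drop k, ?_, ?_, ?_, hAs, hBs⟩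
    · rw [hxy, List.take_append_drop]
    · have hlen : ((π.take k).drop j).length = k - j := by
        simp [List.length_take, List.length_drop]
        omega
      intro hnil
      rw [hnil] at hlen
      simp at hlen
      omega
    · have h1 : (π.take j).length = j := by simp [List.length_take]; omega
      have h2 : ((π.take k).drop j).length = k - j := by
        simp [List.length_take, List.length_drop]; omega
      rw [h1, h2]; omega
  have hcard : Fintype.card (qa × qb) < Fintype.card (Fin (N + 1)) := by
    simp [Fintype.card_prod]; exact hN.ge
  obtain ⟨j, k, hjk, hfeq⟩ := Fintype.exists_ne_map_eq_of_card_lt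
    (fun j : Fin (N + 1) => ((A.eval (π.take j), B.eval (π.take j)) : qa × qb)) hcard
  have hjv : (j : ℕ) ≠ (k : ℕ) := fun hh => hjk (Fin.ext hh)
  have hj1 := j.isLt
  have hk1 := k.isLt
  rcases Nat.lt_or_ge (j : ℕ) (k : ℕ) with hlt | hge
  · exact main j k hlt (by omega) (congrArg Prod.fst hfeq) (congrArg Prod.snd hfeq)
  · exact main k j (by omega) (by omega) (congrArg Prod.fst hfeq.symm) (congrArg Prod.snd hfeq.symm)

lemma finite_bound {L : Set (List σ)} (hf : L.Finite) :
    ∃ M : ℕ, ∀ w ∈ L, w.length ≤ M := by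
  obtain ⟨M, hM⟩ := (hf.image List.length).bddAbove
  exact ⟨M, fun w hw => hM (Set.mem_image_of_mem _ hw)⟩

lemma infinite_long [Fintype σ] {S : Set (List σ)} (h : S.Infinite) (m : ℕ) :
    ∃ w ∈ S, m ≤ w.length := by
  by_contra hc
  push_neg at hc
  exact h (Set.Finite.subset (List.finite_length_lt σ m) (fun w hw => hc w hw))

lemma exists_min_len {P : List σ → Prop} (h : ∃ w, P w) :
    ∃ w, P w ∧ ∀ w', P w' → w.length ≤ w'.length := by
  classical
  have hn : ∃ n, ∃ w, P w ∧ w.length = n := ⟨h.choose.length, h.choose, h.choose_spec, rfl⟩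
  obtain ⟨w, hw, hwl⟩ := Nat.find_spec hn
  refine ⟨w, hw, fun w' hw' => ?_⟩
  have := Nat.find_min' hn (m := w'.length) ⟨w', hw', rfl⟩
  omega

end Pump

section Core
variable {σ : Type} [Fintype σ] {bar : σ → σ} {κ : ℕ} {L1 L2 : Language σ}

lemma core (h1 : L1.IsRegular) (hfin2 : (L2 : Set (List σ)).Finite)
    (hinf : (MGP bar κ L1 L2 : Set (List σ)).Infinite)
    (hH : (hairpinCompletion bar κ L1 L2).IsRegular) : False := by
  obtain ⟨qa, fqa, A, hA⟩ := hH
  obtain ⟨qb, fqb, B, hB⟩ := h1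
  obtain ⟨M, hM⟩ := finite_bound hfin2
  set N := Fintype.card qa * Fintype.card qb with hN
  set L := 2 * N + M + κ + 1 with hL
  obtain ⟨p, hp, hplen⟩ := infinite_long hinf (L + κ)
  obtain ⟨π₁, γ₁, α₁, β₁, hH₁, hcf₁, rfl⟩ := hp
  have hγ₁ : L ≤ γ₁.length := by
    have h₁ := hcf₁.2.1
    rw [List.length_append, h₁] at hplen
    omega
  obtain ⟨π, hPπ, hmin⟩ := exists_min_len
    (P := fun π => ∃ γ α β, CanonFact bar κ L1 L2 π γ α β ∧ L ≤ γ.length)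
    ⟨π₁, γ₁, α₁, β₁, hcf₁, hγ₁⟩
  obtain ⟨γ, α, β, hcf, hγL⟩ := hPπ
  obtain ⟨hform, hακ, hdisj, hP4, hP5⟩ := hcf
  have hπlen : π.length = γ.length + α.length + β.length + α.length + γ.length := by
    simp [hform]; omega
  have hNle : N ≤ π.length := by omega
  obtain ⟨x, y, z, hxyz, hyne, hxyN, hAl, hBl⟩ := exists_loop A B π hNle
  have hylen : 1 ≤ y.length := List.length_pos_iff.mpr hyne
  have hπxyz : π.length = x.length + y.length + z.length := by simp [hxyz]; omega
  have hπ2 : π = x ++ (y ++ z) := by rw [hxyz]; simp [List.append_assoc]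
  have hπ₀H : (x ++ z) ∈ hairpinCompletion bar κ L1 L2 := by
    rw [← hA]
    show A.eval (x ++ z) ∈ A.accept
    rw [hAl z]
    have : π ∈ A.accepts := by rw [hA]; exact ⟨γ, α, β, hform, hακ.ge, hdisj⟩
    rw [hπ2] at this
    exact this
  obtain ⟨γ₀, α₀, β₀, hcf₀⟩ := exists_canonFact hπ₀H
  obtain ⟨hform₀, hακ₀, hdisj₀, hP4₀, hP5₀⟩ := hcf₀
  have hπ₀len : (x ++ z).length = x.length + z.length := by simp
  have hlen₀ : (x ++ z).length
      = γ₀.length + α₀.length + β₀.length + α₀.length + γ₀.length := by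
    simp [hform₀]; omega
  suffices hgoal : L ≤ γ₀.length by
    have := hmin (x ++ z) ⟨γ₀, α₀, β₀, ⟨hform₀, hακ₀, hdisj₀, hP4₀, hP5₀⟩, hgoal⟩
    omega
  rcases hdisj₀ with hu₀ | hw₀
  · -- L1 side
    have hu₀pre : (γ₀ ++ α₀ ++ β₀ ++ ovr bar α₀) <+: x ++ z := ⟨ovr bar γ₀, hform₀.symm⟩
    have hu₀len : (γ₀ ++ α₀ ++ β₀ ++ ovr bar α₀).length
        = γ₀.length + α₀.length + β₀.length + α₀.length := by simp; omega
    rcases Nat.lt_or_ge x.length (γ₀ ++ α₀ ++ β₀ ++ ovr bar α₀).length with hxu | hxu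
    · have hxpre : x <+: x ++ z := ⟨z, rfl⟩
      have hxu₀ : x <+: (γ₀ ++ α₀ ++ β₀ ++ ovr bar α₀) :=
        List.prefix_of_prefix_length_le hxpre hu₀pre (by omega)
      obtain ⟨s, hs⟩ := hxu₀
      have hslen : x.length + s.length = (γ₀ ++ α₀ ++ β₀ ++ ovr bar α₀).length := by
        rw [← hs]; simp
      have hsz : s <+: z := by
        obtain ⟨r, hr⟩ := hu₀pre
        refine ⟨r, ?_⟩
        have h' : x ++ (s ++ r) = x ++ z := by
          rw [← List.append_assoc, hs, hr]
        exact List.append_cancel_left h'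
      have hL1ys : x ++ (y ++ s) ∈ L1 := by
        have h1 : x ++ s ∈ L1 := by rw [hs]; exact hu₀
        rw [← hB] at h1 ⊢
        show B.eval _ ∈ B.accept
        rw [← hBl s]
        exact h1
      have hpreπ : x ++ (y ++ s) <+: π := by
        obtain ⟨r, hr⟩ := hsz
        refine ⟨r, ?_⟩
        rw [hπ2, ← hr]
        simp [List.append_assoc]
      have h4 := (hP4 _ hpreπ hL1ys).length_le
      have hWlen : (γ ++ α ++ β ++ ovr bar α).length
          = γ.length + α.length + β.length + α.length := by simp; omega
      have hxyslen : (x ++ (y ++ s)).length = x.length + y.length + s.length := by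
        simp; omega
      rw [hxyslen, hWlen] at h4
      omega
    · omega
  · -- L2 side
    have hwb := hM _ hw₀
    have hwlen : (α₀ ++ β₀ ++ ovr bar α₀ ++ ovr bar γ₀).length
        = α₀.length + β₀.length + α₀.length + γ₀.length := by simp; omega
    omega

end Core

section Rev
variable {σ : Type} (bar : σ → σ)

/-- preimage of a language under `ovr`. -/
def oL (L : Language σ) : Language σ := {w | ovr bar w ∈ L}

lemma oL_oL (hbar : ∀ a, bar (bar a) = a) (L : Language σ) : oL bar (oL bar L) = L := by
  ext w
  show ovr bar (ovr bar w) ∈ L ↔ w ∈ L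
  rw [ovr_ovr bar hbar]

lemma isRegular_oL {L : Language σ} (h : L.IsRegular) : (oL bar L).IsRegular := by
  obtain ⟨q, fq, Mo, hMo⟩ := h
  -- substitute letters
  let Mb : DFA σ q := ⟨fun st a => Mo.step st (bar a), Mo.start, Mo.accept⟩
  have hMb : ∀ w : List σ, Mb.eval w = Mo.eval (w.map bar) := by
    intro w
    show List.foldl Mb.step Mo.start w = List.foldl Mo.step Mo.start (w.map bar)
    rw [List.foldl_map]
  -- reverse NFA
  let N : NFA σ q := ⟨fun st a => {p | Mb.step p a = st}, Mb.accept, {Mb.start}⟩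
  have key : ∀ (w : List σ) (S : Set q) (p : q),
      p ∈ N.evalFrom S w ↔ Mb.evalFrom p w.reverse ∈ S := by
    intro w
    induction w with
    | nil => intro S p; simp [NFA.evalFrom]
    | cons a w ih =>
      intro S p
      have h1 : N.evalFrom S (a :: w) = N.evalFrom (N.stepSet S a) w := rfl
      rw [h1, ih]
      have h2 : (a :: w).reverse = w.reverse ++ [a] := by simp
      rw [h2, DFA.evalFrom_append_singleton, NFA.mem_stepSet]
      constructor
      · rintro ⟨r, hrS, hr⟩
        have : Mb.step (Mb.evalFrom p w.reverse) a = r := hr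
        rwa [this]
      · intro hst
        exact ⟨_, hst, rfl⟩
  have hNacc : ∀ w : List σ, w ∈ N.accepts ↔ w.reverse ∈ Mb.accepts := by
    intro w
    rw [NFA.mem_accepts]
    constructor
    · rintro ⟨S, hS, hw⟩
      have hS' : S = Mb.start := hS
      rw [hS'] at hw
      exact (key w N.start Mb.start).mp hw
    · intro hw
      exact ⟨Mb.start, rfl, (key w N.start Mb.start).mpr hw⟩
  refine ⟨Set q, inferInstance, N.toDFA, ?_⟩
  rw [NFA.toDFA_correct]
  ext w
  rw [hNacc w]
  show Mb.eval w.reverse ∈ Mb.accept ↔ ovr bar w ∈ L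
  rw [hMb, ← hMo]
  show w.reverse.map bar ∈ Mo.accepts ↔ (w.map bar).reverse ∈ Mo.accepts
  rw [List.map_reverse]

end Rev

section Transfer
variable {σ : Type} {bar : σ → σ} {κ : ℕ}

lemma ovrE1 (hbar : ∀ a, bar (bar a) = a) (γ α β : List σ) :
    ovr bar (γ ++ α ++ β ++ ovr bar α ++ ovr bar γ)
      = γ ++ α ++ ovr bar β ++ ovr bar α ++ ovr bar γ := by
  simp [ovr_append, ovr_ovr bar hbar, List.append_assoc]

lemma ovrE2 (hbar : ∀ a, bar (bar a) = a) (γ α β : List σ) :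
    ovr bar (γ ++ α ++ β ++ ovr bar α)
      = α ++ ovr bar β ++ ovr bar α ++ ovr bar γ := by
  simp [ovr_append, ovr_ovr bar hbar, List.append_assoc]

lemma ovrE3 (hbar : ∀ a, bar (bar a) = a) (γ α β : List σ) :
    ovr bar (α ++ β ++ ovr bar α ++ ovr bar γ)
      = γ ++ α ++ ovr bar β ++ ovr bar α := by
  simp [ovr_append, ovr_ovr bar hbar, List.append_assoc]

lemma hairpin_ovr (hbar : ∀ a, bar (bar a) = a) (L1 L2 : Language σ) {π : List σ}
    (h : π ∈ hairpinCompletion bar κ L1 L2) :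
    ovr bar π ∈ hairpinCompletion bar κ (oL bar L2) (oL bar L1) := by
  obtain ⟨γ, α, β, hform, hκα, hdisj⟩ := h
  refine ⟨γ, α, ovr bar β, ?_, by simpa using hκα, ?_⟩
  · rw [hform, ovrE1 hbar]
  · rcases hdisj with h | h
    · right
      show ovr bar (α ++ ovr bar β ++ ovr bar α ++ ovr bar γ) ∈ L1
      have he := ovrE3 hbar (β := ovr bar β) (γ := γ) (α := α)
      rw [ovr_ovr bar hbar] at he
      rw [he]; exact h
    · left
      show ovr bar (γ ++ α ++ ovr bar β ++ ovr bar α) ∈ L2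
      have he := ovrE2 hbar (β := ovr bar β) (γ := γ) (α := α)
      rw [ovr_ovr bar hbar] at he
      rw [he]; exact h

lemma canonFact_ovr (hbar : ∀ a, bar (bar a) = a) (L1 L2 : Language σ) {π γ α β : List σ}
    (h : CanonFact bar κ L1 L2 π γ α β) :
    CanonFact bar κ (oL bar L2) (oL bar L1) (ovr bar π) γ α (ovr bar β) := by
  obtain ⟨hform, hακ, hdisj, hP4, hP5⟩ := h
  refine ⟨by rw [hform, ovrE1 hbar], hακ, ?_, ?_, ?_⟩
  · rcases hdisj with h | h
    · right
      show ovr bar (α ++ ovr bar β ++ ovr bar α ++ ovr bar γ) ∈ L1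
      have he := ovrE3 hbar (β := ovr bar β) (γ := γ) (α := α)
      rw [ovr_ovr bar hbar] at he
      rw [he]; exact h
    · left
      show ovr bar (γ ++ α ++ ovr bar β ++ ovr bar α) ∈ L2
      have he := ovrE2 hbar (β := ovr bar β) (γ := γ) (α := α)
      rw [ovr_ovr bar hbar] at he
      rw [he]; exact h
  · intro u hupre huL2
    have h1 : ovr bar u <:+ ovr bar (ovr bar π) := ovr_suffix_of_prefix bar hupre
    rw [ovr_ovr bar hbar] at h1
    have h2 := hP5 _ h1 huL2
    have h3 := ovr_prefix_of_suffix bar h2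
    rw [ovr_ovr bar hbar, ovrE3 hbar] at h3
    exact h3
  · intro u husuf huL1
    have h1 : ovr bar u <+: ovr bar (ovr bar π) := ovr_prefix_of_suffix bar husuf
    rw [ovr_ovr bar hbar] at h1
    have h2 := hP4 _ h1 huL1
    have h3 := ovr_suffix_of_prefix bar h2
    rw [ovr_ovr bar hbar, ovrE2 hbar] at h3
    exact h3

lemma MGP_subset (hbar : ∀ a, bar (bar a) = a) (L1 L2 : Language σ) :
    ∀ p : List σ, p ∈ MGP bar κ L1 L2 → p ∈ MGP bar κ (oL bar L2) (oL bar L1) := by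
  rintro p ⟨π, γ, α, β, hH, hcf, rfl⟩
  exact ⟨ovr bar π, γ, α, ovr bar β, hairpin_ovr hbar L1 L2 hH,
    canonFact_ovr hbar L1 L2 hcf, rfl⟩

lemma MGP_eq (hbar : ∀ a, bar (bar a) = a) (L1 L2 : Language σ) :
    MGP bar κ (oL bar L2) (oL bar L1) = MGP bar κ L1 L2 := by
  ext p
  constructor
  · intro hp
    have := @MGP_subset σ bar κ hbar (oL bar L2) (oL bar L1) p hp
    rwa [oL_oL bar hbar, oL_oL bar hbar] at this
  · exact MGP_subset hbar L1 L2 p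

lemma hairpin_oL (hbar : ∀ a, bar (bar a) = a) (L1 L2 : Language σ) :
    hairpinCompletion bar κ (oL bar L2) (oL bar L1)
      = oL bar (hairpinCompletion bar κ L1 L2) := by
  ext π'
  constructor
  · intro h
    have := hairpin_ovr hbar (oL bar L2) (oL bar L1) h
    rw [oL_oL bar hbar, oL_oL bar hbar] at this
    exact this
  · intro h
    have := hairpin_ovr hbar L1 L2 h
    rwa [ovr_ovr bar hbar] at this

end Transfer

theorem mgp_infinite_imp_hairpin_not_regular
    {σ : Type} [Fintype σ] (hσ : 2 ≤ Fintype.card σ)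
    (bar : σ → σ) (hbar : ∀ a, bar (bar a) = a)
    (κ : ℕ) (hκ : 1 ≤ κ)
    (L1 L2 : Language σ) (h1 : L1.IsRegular) (h2 : L2.IsRegular)
    (hinf : (MGP bar κ L1 L2 : Set (List σ)).Infinite)
    (hfin : (L1 : Set (List σ)).Finite ∨ (L2 : Set (List σ)).Finite) :
    ¬ (hairpinCompletion bar κ L1 L2).IsRegular := by
  intro hreg
  rcases hfin with hf1 | hf2
  · have h2' : (oL bar L2).IsRegular := isRegular_oL bar h2
    have hfin' : ((oL bar L1 : Language σ) : Set (List σ)).Finite := by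
      have heq : ((oL bar L1 : Language σ) : Set (List σ))
          = (ovr bar) ⁻¹' (L1 : Set (List σ)) := rfl
      rw [heq]
      apply Set.Finite.preimage _ hf1
      intro a _ b _ hab
      rw [← ovr_ovr bar hbar a, hab, ovr_ovr bar hbar]
    have hinf' : (MGP bar κ (oL bar L2) (oL bar L1) : Set (List σ)).Infinite := by
      rw [MGP_eq hbar L1 L2]
      exact hinf
    have hreg' : (hairpinCompletion bar κ (oL bar L2) (oL bar L1)).IsRegular := by
      rw [hairpin_oL hbar L1 L2]
      exact isRegular_oL bar hreg
    exact core h2' hfin' hinf' hreg'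
  · exact core h1 hf2 hinf hreg
end

section
/- Let K ⊆ Σ* be a regular language and let Pref(K) = { u ∈ Σ* : there exists v ∈ Σ* with u·v ∈ K } be its prefix closure. Then the growth indicators of K and Pref(K) coincide: λ_K = λ_{Pref(K)}. -/
/-- The growth indicator of a language: the infimum of all `λ ≥ 0` such that
`|L ∩ Σ^m| ≤ c·λ^m` for some constant `c > 0` and all `m`. -/
noncomputable def growthInd {σ : Type} (L : Language σ) : ℝ :=
  sInf { l : ℝ | 0 ≤ l ∧ ∃ c : ℝ, 0 < c ∧
    ∀ m : ℕ, (Set.ncard { w : List σ | w ∈ L ∧ w.length = m } : ℝ) ≤ c * l ^ m }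

/-- The prefix closure of a language. -/
def prefClosure {σ : Type} (K : Language σ) : Language σ :=
  { u | ∃ v : List σ, u ++ v ∈ K }

/-- From any state, if some word is accepted from it, a short word is accepted from it. -/
lemma short_accept {α τ : Type} [Fintype τ] (M : DFA α τ) (s : τ) :
    ∀ N (v : List α), v.length ≤ N → M.evalFrom s v ∈ M.accept →
      ∃ v' : List α, v'.length ≤ Fintype.card τ ∧ M.evalFrom s v' ∈ M.accept := by
  intro N
  induction N with
  | zero => intro v hv hacc; exact ⟨v, by omega, hacc⟩
  | succ N ih =>
    intro v hv hacc
    by_cases hle : v.length ≤ Fintype.card τ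
    · exact ⟨v, hle, hacc⟩
    · push_neg at hle
      obtain ⟨q, a, b, c, hsplit, hlen, hb, ha, hloop, hc⟩ :=
        M.evalFrom_split (s := s) (t := M.evalFrom s v) (x := v) (by omega) rfl
      refine ih (a ++ c) ?_ ?_
      · have : v.length = a.length + b.length + c.length := by
          rw [hsplit]; simp; omega
        have hbpos : 0 < b.length := List.length_pos_iff.mpr hb
        simp only [List.length_append]
        omega
      · rw [DFA.evalFrom_of_append, ha, hc]; exact hacc

/-- Counting bound: number of words in K with length in [m, m+n] is ≤ (n+1)·B. -/
lemma count_interval_le {σ : Type} [Fintype σ] (K : Language σ) (m : ℕ) (B : ℝ) :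
    ∀ n : ℕ, (∀ j : ℕ, j ≤ n →
        (Set.ncard { w : List σ | w ∈ K ∧ w.length = m + j } : ℝ) ≤ B) →
      (Set.ncard { w : List σ | w ∈ K ∧ m ≤ w.length ∧ w.length ≤ m + n } : ℝ)
      ≤ (n + 1) * B := by
  intro n
  induction n with
  | zero =>
    have : { w : List σ | w ∈ K ∧ m ≤ w.length ∧ w.length ≤ m + 0 }
        = { w : List σ | w ∈ K ∧ w.length = m } := by
      ext w; constructor
      · rintro ⟨h1, h2, h3⟩; exact ⟨h1, by omega⟩
      · rintro ⟨h1, h2⟩; exact ⟨h1, by omega, by omega⟩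
    intro h
    rw [this]
    simpa using h 0 le_rfl
  | succ n ih =>
    intro h
    have hunion : { w : List σ | w ∈ K ∧ m ≤ w.length ∧ w.length ≤ m + (n + 1) }
        = { w : List σ | w ∈ K ∧ m ≤ w.length ∧ w.length ≤ m + n }
          ∪ { w : List σ | w ∈ K ∧ w.length = m + (n + 1) } := by
      ext w
      simp only [Set.mem_setOf_eq, Set.mem_union]
      constructor
      · rintro ⟨h1, h2, h3⟩
        rcases Nat.lt_or_ge w.length (m + (n+1)) with h' | h'
        · exact Or.inl ⟨h1, h2, by omega⟩
        · exact Or.inr ⟨h1, by omega⟩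
      · rintro (⟨h1, h2, h3⟩ | ⟨h1, h2⟩)
        · exact ⟨h1, h2, by omega⟩
        · exact ⟨h1, by omega, by omega⟩
    have hfin1 : { w : List σ | w ∈ K ∧ m ≤ w.length ∧ w.length ≤ m + n }.Finite :=
      (List.finite_length_le σ (m + n)).subset fun w hw => hw.2.2
    have hfin2 : { w : List σ | w ∈ K ∧ w.length = m + (n + 1) }.Finite :=
      (List.finite_length_eq σ (m + (n + 1))).subset fun w hw => hw.2
    have hcard := Set.ncard_union_le
      { w : List σ | w ∈ K ∧ m ≤ w.length ∧ w.length ≤ m + n }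
      { w : List σ | w ∈ K ∧ w.length = m + (n + 1) }
    rw [hunion]
    calc (Set.ncard ({ w : List σ | w ∈ K ∧ m ≤ w.length ∧ w.length ≤ m + n }
          ∪ { w : List σ | w ∈ K ∧ w.length = m + (n + 1) }) : ℝ)
        ≤ (Set.ncard { w : List σ | w ∈ K ∧ m ≤ w.length ∧ w.length ≤ m + n } : ℝ)
          + (Set.ncard { w : List σ | w ∈ K ∧ w.length = m + (n + 1) } : ℝ) := by
            exact_mod_cast hcard
      _ ≤ (n + 1) * B + B := add_le_add (ih fun j hj => h j (by omega)) (h (n + 1) le_rfl)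
      _ = ((n : ℝ) + 1 + 1) * B := by ring
      _ = ((n + 1 : ℕ) + 1) * B := by push_cast; ring

theorem growth_indicator_prefix_closure
    {σ : Type} [Fintype σ] (hσ : 2 ≤ Fintype.card σ)
    (K : Language σ) (hK : K.IsRegular) :
    growthInd K = growthInd (prefClosure K) := by
  -- it suffices to show the two defining sets are equal
  unfold growthInd
  congr 1
  -- key fact: there is n such that every prefix extends within n letters
  obtain ⟨τ, hτ, M, hM⟩ := hK
  obtain ⟨n, hn⟩ : ∃ n : ℕ, ∀ u ∈ prefClosure K, ∃ v : List σ,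
      v.length ≤ n ∧ u ++ v ∈ K := by
    refine ⟨Fintype.card τ, fun u hu => ?_⟩
    obtain ⟨v, hv⟩ := hu
    rw [← hM] at hv
    rw [DFA.mem_accepts, DFA.eval, DFA.evalFrom_of_append] at hv
    obtain ⟨v', hv'len, hv'acc⟩ := short_accept M _ v.length v le_rfl hv
    refine ⟨v', hv'len, ?_⟩
    rw [← hM, DFA.mem_accepts, DFA.eval, DFA.evalFrom_of_append]
    exact hv'acc
  ext l
  simp only [Set.mem_setOf_eq]
  constructor
  · -- a witness for K gives a witness for prefClosure K
    rintro ⟨hl, c, hc, hb⟩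
    set μ : ℝ := max 1 l with hμ
    have hμ1 : (1 : ℝ) ≤ μ := le_max_left _ _
    have hμ0 : (0 : ℝ) ≤ μ := by linarith
    refine ⟨hl, (n + 1) * (c * μ ^ n), by positivity, fun m => ?_⟩
    -- choose an extension for each prefix
    classical
    have hext : ∀ w : List σ, w ∈ prefClosure K → ∃ v : List σ,
        v.length ≤ n ∧ w ++ v ∈ K := hn
    choose! ext hextlen hextmem using hext
    -- injection into words of K with length in [m, m+n]
    have hinj : (Set.ncard { w : List σ | w ∈ prefClosure K ∧ w.length = m } : ℝ)
        ≤ (Set.ncard { w : List σ | w ∈ K ∧ m ≤ w.length ∧ w.length ≤ m + n } : ℝ) := by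
      have hfin : { w : List σ | w ∈ K ∧ m ≤ w.length ∧ w.length ≤ m + n }.Finite :=
        (List.finite_length_le σ (m + n)).subset fun w hw => hw.2.2
      have := Set.ncard_le_ncard_of_injOn (fun w => w ++ ext w)
        (s := { w : List σ | w ∈ prefClosure K ∧ w.length = m })
        (t := { w : List σ | w ∈ K ∧ m ≤ w.length ∧ w.length ≤ m + n })
        (fun w hw => by
          obtain ⟨hw1, hw2⟩ := hw
          refine ⟨hextmem w hw1, ?_, ?_⟩ <;>
            · have := hextlen w hw1
              simp only [List.length_append]
              omega)
        (fun w hw w' hw' heq => by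
          have hlen : w.length = w'.length := hw.2.trans hw'.2.symm
          exact (List.append_inj heq hlen).1)
        hfin
      exact_mod_cast this
    -- bound each exact-length slice
    have hBj : ∀ j : ℕ, j ≤ n →
        (Set.ncard { w : List σ | w ∈ K ∧ w.length = m + j } : ℝ)
        ≤ c * μ ^ n * l ^ m := by
      intro j hj
      have hlμ : l ≤ μ := le_max_right _ _
      calc (Set.ncard { w : List σ | w ∈ K ∧ w.length = m + j } : ℝ)
          ≤ c * l ^ (m + j) := hb (m + j)
        _ = c * (l ^ j * l ^ m) := by rw [pow_add]; ring
        _ ≤ c * (μ ^ n * l ^ m) := by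
            have h1 : l ^ j ≤ μ ^ j := pow_le_pow_left₀ hl hlμ j
            have h2 : μ ^ j ≤ μ ^ n := pow_le_pow_right₀ hμ1 hj
            have h3 : (0:ℝ) ≤ l ^ m := pow_nonneg hl m
            have h4 : l ^ j * l ^ m ≤ μ ^ n * l ^ m :=
              mul_le_mul_of_nonneg_right (h1.trans h2) h3
            exact mul_le_mul_of_nonneg_left h4 hc.le
        _ = c * μ ^ n * l ^ m := by ring
    calc (Set.ncard { w : List σ | w ∈ prefClosure K ∧ w.length = m } : ℝ)
        ≤ _ := hinj
      _ ≤ (n + 1) * (c * μ ^ n * l ^ m) := count_interval_le K m _ n hBj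
      _ = (n + 1) * (c * μ ^ n) * l ^ m := by ring
  · -- a witness for prefClosure K gives a witness for K (monotonicity)
    rintro ⟨hl, c, hc, hb⟩
    refine ⟨hl, c, hc, fun m => ?_⟩
    refine le_trans ?_ (hb m)
    have hsub : { w : List σ | w ∈ K ∧ w.length = m }
        ⊆ { w : List σ | w ∈ prefClosure K ∧ w.length = m } := by
      rintro w ⟨hw1, hw2⟩
      exact ⟨⟨[], by simpa using hw1⟩, hw2⟩
    have hfin : { w : List σ | w ∈ prefClosure K ∧ w.length = m }.Finite :=
      (List.finite_length_eq σ m).subset fun w hw => hw.2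
    exact_mod_cast Set.ncard_le_ncard hsub hfin
end

section
/- Let B, R ⊆ Σ* be nonempty languages and let B^R = { v·β·overline(v) : v ∈ R, β ∈ B }. Then the growth indicator of B^R equals max(λ_B, √(λ_R)). -/
/-- The conjugation language `B^R = { v·β·overline(v) : v ∈ R, β ∈ B }`. -/
def conjLang {σ : Type} (bar : σ → σ) (B R : Language σ) : Language σ :=
  { x | ∃ v ∈ R, ∃ β ∈ B, x = v ++ β ++ ovr bar v }

namespace GrowthAux

open Set Filter

variable {σ : Type} [Fintype σ]

/-- The defining set of the growth indicator. -/
def GS (L : Language σ) : Set ℝ :=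
  { l : ℝ | 0 ≤ l ∧ ∃ c : ℝ, 0 < c ∧
    ∀ m : ℕ, (Set.ncard { w : List σ | w ∈ L ∧ w.length = m } : ℝ) ≤ c * l ^ m }

lemma growthInd_def (L : Language σ) : growthInd L = sInf (GS L) := rfl

lemma finite_len (L : Language σ) (m : ℕ) :
    { w : List σ | w ∈ L ∧ w.length = m }.Finite :=
  (List.finite_length_eq σ m).subset fun _ hw => hw.2

lemma ncard_full (m : ℕ) :
    ({ w : List σ | w.length = m }).ncard = Fintype.card σ ^ m := by
  rw [← Nat.card_coe_set_eq]
  have e : { w : List σ | w.length = m } ≃ List.Vector σ m :=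
    ⟨fun w => ⟨w.1, w.2⟩, fun v => ⟨v.1, v.2⟩, fun _ => rfl, fun _ => rfl⟩
  rw [Nat.card_congr e, Nat.card_eq_fintype_card, card_vector]

lemma card_mem_GS (L : Language σ) : ((Fintype.card σ : ℝ)) ∈ GS L := by
  refine ⟨Nat.cast_nonneg _, 1, one_pos, fun m => ?_⟩
  rw [one_mul]
  have h1 : ({ w : List σ | w ∈ L ∧ w.length = m }).ncard ≤
      ({ w : List σ | w.length = m }).ncard :=
    Set.ncard_le_ncard (fun _ hw => hw.2) (List.finite_length_eq σ m)
  calc ((Set.ncard { w : List σ | w ∈ L ∧ w.length = m } : ℕ) : ℝ)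
      ≤ (({ w : List σ | w.length = m }).ncard : ℝ) := by exact_mod_cast h1
    _ = ((Fintype.card σ ^ m : ℕ) : ℝ) := by rw [ncard_full]
    _ = (Fintype.card σ : ℝ) ^ m := by push_cast; ring

lemma growthInd_nonneg (L : Language σ) : 0 ≤ growthInd L :=
  le_csInf ⟨_, card_mem_GS L⟩ fun _ hl => hl.1

lemma growthInd_le {L : Language σ} {l : ℝ} (h : l ∈ GS L) : growthInd L ≤ l :=
  csInf_le ⟨0, fun _ hx => hx.1⟩ h

lemma mem_GS_of_lt {L : Language σ} {l : ℝ} (h : growthInd L < l) : l ∈ GS L := by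
  obtain ⟨l', ⟨hl'0, c, hc, hb⟩, hl't⟩ := exists_lt_of_csInf_lt ⟨_, card_mem_GS L⟩ h
  refine ⟨hl'0.trans hl't.le, c, hc, fun m => (hb m).trans ?_⟩
  exact mul_le_mul_of_nonneg_left (pow_le_pow_left₀ hl'0 hl't.le m) hc.le

lemma lower_B (bar : σ → σ) (B R : Language σ) (hR : (R : Set (List σ)).Nonempty) :
    growthInd B ≤ growthInd (conjLang bar B R) := by
  refine le_of_forall_gt_imp_ge_of_dense fun l hl => ?_
  have hl0 : 0 < l := (growthInd_nonneg _).trans_lt hl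
  obtain ⟨-, c, hc, hb⟩ := mem_GS_of_lt hl
  obtain ⟨v₀, hv₀⟩ := hR
  apply growthInd_le
  refine ⟨hl0.le, c * l ^ (2 * v₀.length), by positivity, fun m => ?_⟩
  have key : ({ β : List σ | β ∈ B ∧ β.length = m }).ncard ≤
      ({ w : List σ | w ∈ conjLang bar B R ∧ w.length = m + 2 * v₀.length }).ncard := by
    refine Set.ncard_le_ncard_of_injOn (fun β => v₀ ++ β ++ ovr bar v₀) ?_ ?_ (finite_len _ _)
    · rintro β ⟨hβ, hlen⟩
      refine ⟨⟨v₀, hv₀, β, hβ, rfl⟩, ?_⟩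
      simp only [List.length_append, ovr, List.length_reverse, List.length_map, hlen]
      omega
    · intro a _ b _ hab
      exact List.append_cancel_left (List.append_cancel_right hab)
  calc ((Set.ncard { β : List σ | β ∈ B ∧ β.length = m } : ℕ) : ℝ)
      ≤ (({ w : List σ | w ∈ conjLang bar B R ∧ w.length = m + 2 * v₀.length }).ncard : ℝ) := by
        exact_mod_cast key
    _ ≤ c * l ^ (m + 2 * v₀.length) := hb _
    _ = c * l ^ (2 * v₀.length) * l ^ m := by rw [pow_add]; ring

lemma lower_R (bar : σ → σ) (B R : Language σ) (hB : (B : Set (List σ)).Nonempty) :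
    Real.sqrt (growthInd R) ≤ growthInd (conjLang bar B R) := by
  refine le_of_forall_gt_imp_ge_of_dense fun l hl => ?_
  have hl0 : 0 < l := (growthInd_nonneg _).trans_lt hl
  obtain ⟨-, c, hc, hb⟩ := mem_GS_of_lt hl
  obtain ⟨β₀, hβ₀⟩ := hB
  have h2 : growthInd R ≤ l ^ 2 := by
    apply growthInd_le
    refine ⟨by positivity, c * l ^ β₀.length, by positivity, fun k => ?_⟩
    have key : ({ v : List σ | v ∈ R ∧ v.length = k }).ncard ≤
        ({ w : List σ | w ∈ conjLang bar B R ∧ w.length = 2 * k + β₀.length }).ncard := by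
      refine Set.ncard_le_ncard_of_injOn (fun v => v ++ β₀ ++ ovr bar v) ?_ ?_ (finite_len _ _)
      · rintro v ⟨hv, hlen⟩
        refine ⟨⟨v, hv, β₀, hβ₀, rfl⟩, ?_⟩
        simp only [List.length_append, ovr, List.length_reverse, List.length_map, hlen]
        omega
      · rintro v₁ ⟨-, h₁⟩ v₂ ⟨-, h₂⟩ hab
        simp only [List.append_assoc] at hab
        exact (List.append_inj hab (h₁.trans h₂.symm)).1
    calc ((Set.ncard { v : List σ | v ∈ R ∧ v.length = k } : ℕ) : ℝ)
        ≤ (({ w : List σ | w ∈ conjLang bar B R ∧ w.length = 2 * k + β₀.length }).ncard : ℝ) := by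
          exact_mod_cast key
      _ ≤ c * l ^ (2 * k + β₀.length) := hb _
      _ = c * l ^ β₀.length * (l ^ 2) ^ k := by rw [pow_add, pow_mul]; ring
  calc Real.sqrt (growthInd R) ≤ Real.sqrt (l ^ 2) := Real.sqrt_le_sqrt h2
    _ = l := by rw [Real.sqrt_sq hl0.le]

lemma upper (bar : σ → σ) (B R : Language σ) :
    growthInd (conjLang bar B R) ≤ max (growthInd B) (Real.sqrt (growthInd R)) := by
  classical
  set μ := max (growthInd B) (Real.sqrt (growthInd R)) with hμdef
  refine le_of_forall_gt_imp_ge_of_dense fun l hl => ?_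
  have hμ0 : 0 ≤ μ := le_max_of_le_right (Real.sqrt_nonneg _)
  have hl0 : 0 < l := hμ0.trans_lt hl
  set l' := (μ + l) / 2 with hl'def
  have hμl' : μ < l' := by rw [hl'def]; linarith
  have hl'l : l' < l := by rw [hl'def]; linarith
  have hl'0 : 0 < l' := hμ0.trans_lt hμl'
  clear_value l'
  obtain ⟨-, cB, hcB, hbB⟩ :=
    mem_GS_of_lt (lt_of_le_of_lt (le_max_left _ _) hμl' : growthInd B < l')
  have hsq : growthInd R < l' ^ 2 := by
    have h1 : Real.sqrt (growthInd R) < l' := lt_of_le_of_lt (le_max_right _ _) hμl'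
    have h2 := Real.sq_sqrt (growthInd_nonneg R)
    nlinarith [Real.sqrt_nonneg (growthInd R)]
  obtain ⟨-, cR, hcR, hbR⟩ := mem_GS_of_lt hsq
  obtain ⟨M, hM⟩ := (tendsto_self_mul_const_pow_of_lt_one
    (div_nonneg hl'0.le hl0.le) ((div_lt_one hl0).mpr hl'l)).bddAbove_range
  have hM0 : 0 ≤ M := by
    have := hM (Set.mem_range_self 0)
    simpa using this
  apply growthInd_le
  refine ⟨hl0.le, cR * cB * (M + 1), by positivity, fun m => ?_⟩
  -- the slice sets of pairs
  set S : ℕ → Set (List σ × List σ) := fun k =>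
    { v : List σ | v ∈ R ∧ v.length = k } ×ˢ
      { β : List σ | β ∈ B ∧ β.length = m - 2 * k } with hSdef
  have hfinS : ∀ k, (S k).Finite := fun k => (finite_len R k).prod (finite_len B _)
  have hT := finite_len (conjLang bar B R) m
  set g : List σ × List σ → List σ := fun p => p.1 ++ p.2 ++ ovr bar p.1 with hgdef
  -- counting in ℕ
  have h1 : ({ w : List σ | w ∈ conjLang bar B R ∧ w.length = m }).ncard ≤
      ∑ k ∈ Finset.range (m / 2 + 1), (S k).ncard := by
    have hsub : hT.toFinset ⊆
        (Finset.range (m / 2 + 1)).biUnion (fun k => (hfinS k).toFinset.image g) := by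
      intro w hw
      rw [Set.Finite.mem_toFinset] at hw
      obtain ⟨⟨v, hv, β, hβ, rfl⟩, hlen⟩ := hw
      have hlw : v.length + β.length + v.length = m := by
        simpa only [List.length_append, ovr, List.length_reverse, List.length_map] using hlen
      refine Finset.mem_biUnion.mpr ⟨v.length, Finset.mem_range.mpr (by omega), ?_⟩
      refine Finset.mem_image.mpr ⟨(v, β), ?_, rfl⟩
      rw [Set.Finite.mem_toFinset]
      refine ⟨⟨hv, rfl⟩, hβ, ?_⟩
      show β.length = m - 2 * v.length
      omega
    calc ({ w : List σ | w ∈ conjLang bar B R ∧ w.length = m }).ncard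
        = hT.toFinset.card := Set.ncard_eq_toFinset_card _ hT
      _ ≤ ((Finset.range (m / 2 + 1)).biUnion fun k => (hfinS k).toFinset.image g).card :=
          Finset.card_le_card hsub
      _ ≤ ∑ k ∈ Finset.range (m / 2 + 1), ((hfinS k).toFinset.image g).card :=
          Finset.card_biUnion_le
      _ ≤ ∑ k ∈ Finset.range (m / 2 + 1), (S k).ncard := by
          refine Finset.sum_le_sum fun k _ => ?_
          exact Finset.card_image_le.trans_eq (Set.ncard_eq_toFinset_card _ (hfinS k)).symm
  -- each term bound in ℝ
  have h2 : ∀ k ∈ Finset.range (m / 2 + 1), ((S k).ncard : ℝ) ≤ cR * cB * l' ^ m := by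
    intro k hk
    have h2k : 2 * k ≤ m := by
      have := Finset.mem_range.mp hk; omega
    have hprod : (S k).ncard =
        ({ v : List σ | v ∈ R ∧ v.length = k }).ncard *
          ({ β : List σ | β ∈ B ∧ β.length = m - 2 * k }).ncard := by
      rw [hSdef, ← Nat.card_coe_set_eq, Nat.card_congr (Equiv.Set.prod _ _),
        Nat.card_prod, Nat.card_coe_set_eq, Nat.card_coe_set_eq]
    rw [hprod]
    push_cast
    calc (({ v : List σ | v ∈ R ∧ v.length = k }).ncard : ℝ) *
          (({ β : List σ | β ∈ B ∧ β.length = m - 2 * k }).ncard : ℝ)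
        ≤ (cR * (l' ^ 2) ^ k) * (cB * l' ^ (m - 2 * k)) :=
          mul_le_mul (hbR k) (hbB (m - 2 * k)) (Nat.cast_nonneg _) (by positivity)
      _ = cR * cB * (l' ^ (2 * k) * l' ^ (m - 2 * k)) := by rw [pow_mul]; ring
      _ = cR * cB * l' ^ m := by rw [← pow_add]; congr 2; omega
  have hMm : ((m : ℝ) + 1) * l' ^ m ≤ (M + 1) * l ^ m := by
    have ha : (m : ℝ) * (l' / l) ^ m ≤ M := hM (Set.mem_range_self m)
    have hb' : (l' / l) ^ m ≤ 1 :=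
      pow_le_one₀ (div_nonneg hl'0.le hl0.le) ((div_le_one hl0).mpr hl'l.le)
    have hc' : ((m : ℝ) + 1) * (l' / l) ^ m ≤ M + 1 := by
      calc ((m : ℝ) + 1) * (l' / l) ^ m = (m : ℝ) * (l' / l) ^ m + (l' / l) ^ m := by ring
        _ ≤ M + 1 := add_le_add ha hb'
    have h3 : l' ^ m = (l' / l) ^ m * l ^ m := by
      rw [div_pow, div_mul_cancel₀]
      positivity
    calc ((m : ℝ) + 1) * l' ^ m = ((m : ℝ) + 1) * (l' / l) ^ m * l ^ m := by rw [h3]; ring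
      _ ≤ (M + 1) * l ^ m := mul_le_mul_of_nonneg_right hc' (by positivity)
  calc ((Set.ncard { w : List σ | w ∈ conjLang bar B R ∧ w.length = m } : ℕ) : ℝ)
      ≤ ((∑ k ∈ Finset.range (m / 2 + 1), (S k).ncard : ℕ) : ℝ) := by exact_mod_cast h1
    _ = ∑ k ∈ Finset.range (m / 2 + 1), ((S k).ncard : ℝ) := by push_cast; rfl
    _ ≤ (Finset.range (m / 2 + 1)).card • (cR * cB * l' ^ m) :=
        Finset.sum_le_card_nsmul _ _ _ h2
    _ = ((m / 2 + 1 : ℕ) : ℝ) * (cR * cB * l' ^ m) := by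
        simp [nsmul_eq_mul]
    _ ≤ ((m : ℝ) + 1) * (cR * cB * l' ^ m) := by
        have hle : ((m / 2 + 1 : ℕ) : ℝ) ≤ (m : ℝ) + 1 := by
          exact_mod_cast (by omega : m / 2 + 1 ≤ m + 1)
        exact mul_le_mul_of_nonneg_right hle (by positivity)
    _ = cR * cB * (((m : ℝ) + 1) * l' ^ m) := by ring
    _ ≤ cR * cB * ((M + 1) * l ^ m) :=
        mul_le_mul_of_nonneg_left hMm (by positivity)
    _ = cR * cB * (M + 1) * l ^ m := by ring

end GrowthAux

theorem growth_indicator_conjugation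
    {σ : Type} [Fintype σ] (hσ : 2 ≤ Fintype.card σ)
    (bar : σ → σ) (hbar : ∀ a, bar (bar a) = a)
    (B R : Language σ) (hB : (B : Set (List σ)).Nonempty)
    (hR : (R : Set (List σ)).Nonempty) :
    growthInd (conjLang bar B R) = max (growthInd B) (Real.sqrt (growthInd R)) := by
  exact le_antisymm (GrowthAux.upper bar B R)
    (max_le (GrowthAux.lower_B bar B R hR) (GrowthAux.lower_R bar B R hB))
end
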